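/- arXiv:2004.06921 — 4 statements merged into one kernel-verified Lean document; each statement's English description precedes it below -/
import Mathlib

section
/- The number of linear k-chord diagrams of length kn with at least j short chords (counted with multiplicity via choices of j disjoint short-chord placements), i.e., the sum over diagrams with exactly q ≥ j short chords of C(q, j), equals ((k(n-j))! / ((k!)^{n-j} (n-j)!)) · C(kn - j(k-1), j). -/
open Finset

variable {α : Type*} [DecidableEq α] {s : Finset α}

/-- Remove a subcollection of parts from a partition. -/
def remParts (P : Finpartition s) (T : Finset (Finset α)) (hT : T ⊆ P.parts) :
    Finpartition (s \ T.sup id) where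
  parts := P.parts \ T
  supIndep := P.supIndep.subset sdiff_subset
  sup_parts := by
    ext x
    simp only [Finset.mem_sup, Finset.mem_sdiff, id_eq]
    constructor
    · rintro ⟨B, ⟨hBp, hBT⟩, hx⟩
      refine ⟨P.le hBp hx, fun hxT => ?_⟩
      obtain ⟨A, hAT, hxA⟩ := hxT
      have hne : A ≠ B := fun h => hBT (h ▸ hAT)
      exact (Finset.disjoint_left.1 (P.disjoint (hT hAT) hBp hne)) hxA hx
    · rintro ⟨hxs, hxT⟩
      refine ⟨P.part x, ⟨P.part_mem.2 hxs, fun hmem => ?_⟩, P.mem_part hxs⟩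
      exact hxT ⟨_, hmem, P.mem_part hxs⟩
  bot_notMem := fun h => P.bot_notMem (Finset.sdiff_subset h)

/-- Add a collection of new pairwise-disjoint parts to a partition of the complement. -/
def addParts (T : Finset (Finset α)) (Q : Finpartition (s \ T.sup id))
    (hTs : T.sup id ⊆ s) (hdisj : (T : Set (Finset α)).PairwiseDisjoint id)
    (hne : ∀ A ∈ T, A ≠ ∅) : Finpartition s where
  parts := Q.parts ∪ T
  supIndep := by
    rw [Finset.supIndep_iff_pairwiseDisjoint, coe_union]
    apply Set.PairwiseDisjoint.union Q.disjoint hdisj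
    intro B hB A hA _
    have h1 : B ⊆ s \ T.sup id := Q.le hB
    have h2 : A ⊆ T.sup id := Finset.le_sup (f := id) hA
    exact Finset.disjoint_left.2 fun x hxB hxA =>
      (Finset.mem_sdiff.1 (h1 hxB)).2 (h2 hxA)
  sup_parts := by
    rw [Finset.sup_union, Q.sup_parts]
    exact sdiff_sup_cancel (Finset.le_iff_subset.2 hTs)
  bot_notMem := by
    rw [Finset.mem_union]
    rintro (h | h)
    · exact Q.bot_notMem h
    · exact hne _ h rfl

lemma addParts_parts (T : Finset (Finset α)) (Q : Finpartition (s \ T.sup id))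
    (hTs) (hdisj) (hne) : (addParts T Q hTs hdisj hne).parts = Q.parts ∪ T := rfl

lemma parts_disjoint_of_compl (T : Finset (Finset α)) (Q : Finpartition (s \ T.sup id)) :
    Disjoint Q.parts T := by
  rw [Finset.disjoint_left]
  intro B hBQ hBT
  have h1 : B ⊆ s \ T.sup id := Q.le hBQ
  have h2 : B ⊆ T.sup id := Finset.le_sup (f := id) hBT
  have hBne : B ≠ ∅ := fun h => Q.bot_notMem (by rwa [h] at hBQ)
  obtain ⟨x, hx⟩ := Finset.nonempty_iff_ne_empty.2 hBne
  exact (Finset.mem_sdiff.1 (h1 hx)).2 (h2 hx)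


/-- The predicate: `I` is a set of `j` pairwise disjoint `k`-intervals inside `[0, m)`. -/
def GoodI (k m j : ℕ) (I : Finset (Finset ℕ)) : Prop :=
  I.card = j ∧ (∀ A ∈ I, ∃ i, A = Finset.Ico i (i + k) ∧ i + k ≤ m) ∧
    (↑I : Set (Finset ℕ)).PairwiseDisjoint id

open scoped Classical in
noncomputable def intervalsF (k m j : ℕ) : Finset (Finset (Finset ℕ)) :=
  ((Finset.range m).powerset.powerset).filter (GoodI k m j)

lemma Ico_start_eq {k i i' : ℕ} (hk : 1 ≤ k)
    (h : Finset.Ico i (i + k) = Finset.Ico i' (i' + k)) : i = i' := by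
  have h1 : i ∈ Finset.Ico i' (i' + k) := h ▸ Finset.mem_Ico.2 ⟨le_refl _, by omega⟩
  have h2 : i' ∈ Finset.Ico i (i + k) := h.symm ▸ Finset.mem_Ico.2 ⟨le_refl _, by omega⟩
  rw [Finset.mem_Ico] at h1 h2
  omega

lemma mem_intervalsF {k m j : ℕ} {I : Finset (Finset ℕ)} :
    I ∈ intervalsF k m j ↔ GoodI k m j I := by
  classical
  rw [intervalsF, Finset.mem_filter, and_iff_right_iff_imp]
  intro hG
  rw [Finset.mem_powerset]
  intro A hA
  rw [Finset.mem_powerset]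
  obtain ⟨i, rfl, hb⟩ := hG.2.1 A hA
  rw [Finset.range_eq_Ico]
  exact Finset.Ico_subset_Ico (Nat.zero_le _) hb

lemma intervalsF_card (k : ℕ) (hk : 1 ≤ k) : ∀ m j, (intervalsF k m j).card = (m - j * (k - 1)).choose j := by
  intro m
  induction m using Nat.strong_induction_on with
  | _ m IH =>
  intro j
  match j with
  | 0 =>
    have : intervalsF k m 0 = {∅} := by
      ext I
      simp only [mem_intervalsF, GoodI, Finset.mem_singleton, Finset.card_eq_zero]
      constructor
      · rintro ⟨rfl, -, -⟩; rfl
      · rintro rfl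
        exact ⟨rfl, by simp, by simp⟩
    simp [this]
  | j + 1 =>
    by_cases hm : m < k
    · have he : intervalsF k m (j + 1) = ∅ := by
        apply Finset.eq_empty_of_forall_notMem
        intro I hI
        rw [mem_intervalsF] at hI
        obtain ⟨hcard, hint, -⟩ := hI
        have : I.Nonempty := Finset.card_pos.1 (by omega)
        obtain ⟨A, hA⟩ := this
        obtain ⟨i, -, hb⟩ := hint A hA
        omega
      rw [he, Finset.card_empty]
      have h1 : k - 1 ≤ (j + 1) * (k - 1) := Nat.le_mul_of_pos_left _ (by omega)
      have : m - (j + 1) * (k - 1) < j + 1 := by omega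
      exact (Nat.choose_eq_zero_of_lt this).symm
    · push_neg at hm
      classical
      have hsplit := Finset.card_filter_add_card_filter_not
        (s := intervalsF k m (j + 1)) (p := fun I => Finset.Ico (m - k) m ∈ I)
      -- the filter without the last interval
      have h1 : (intervalsF k m (j + 1)).filter (fun I => ¬ Finset.Ico (m - k) m ∈ I)
          = intervalsF k (m - 1) (j + 1) := by
        ext I
        simp only [Finset.mem_filter, mem_intervalsF, GoodI]
        constructor
        · rintro ⟨⟨hcard, hint, hpd⟩, hnot⟩
          refine ⟨hcard, fun A hA => ?_, hpd⟩
          obtain ⟨i, rfl, hb⟩ := hint A hA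
          refine ⟨i, rfl, ?_⟩
          rcases Nat.lt_or_ge (i + k) m with h | h
          · omega
          · exfalso
            have : i = m - k := by omega
            subst this
            have : m - k + k = m := by omega
            rw [this] at hA
            exact hnot hA
        · rintro ⟨hcard, hint, hpd⟩
          refine ⟨⟨hcard, fun A hA => ?_, hpd⟩, fun hmem => ?_⟩
          · obtain ⟨i, rfl, hb⟩ := hint A hA
            exact ⟨i, rfl, by omega⟩
          · obtain ⟨i, hAe, hb⟩ := hint _ hmem
            have hmk : m - k + k = m := by omega
            have hAe' : Finset.Ico (m - k) (m - k + k) = Finset.Ico i (i + k) := by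
              rw [hmk]; exact hAe
            have := Ico_start_eq hk hAe'
            omega
      -- the filter with the last interval
      have h2 : ((intervalsF k m (j + 1)).filter (fun I => Finset.Ico (m - k) m ∈ I)).card
          = (intervalsF k (m - k) j).card := by
        apply Finset.card_bij' (fun I _ => I.erase (Finset.Ico (m - k) m))
          (fun I _ => insert (Finset.Ico (m - k) m) I)
        · intro I hI
          rw [Finset.mem_filter] at hI
          exact Finset.insert_erase hI.2
        · intro I hI
          rw [mem_intervalsF] at hI
          apply Finset.erase_insert
          intro hmem
          obtain ⟨i, hAe, hb⟩ := hI.2.1 _ hmem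
          have hmk : m - k + k = m := by omega
          have hAe' : Finset.Ico (m - k) (m - k + k) = Finset.Ico i (i + k) := by
            rw [hmk]; exact hAe
          have := Ico_start_eq hk hAe'
          omega

        · rintro I hI
          rw [Finset.mem_filter, mem_intervalsF] at hI
          obtain ⟨⟨hcard, hint, hpd⟩, hmem⟩ := hI
          rw [mem_intervalsF]
          refine ⟨by rw [Finset.card_erase_of_mem hmem, hcard]; omega, fun A hA => ?_, 
            hpd.subset (by simp [Finset.coe_subset])⟩
          obtain ⟨hne, hAI⟩ := Finset.mem_erase.1 hA
          obtain ⟨i, rfl, hb⟩ := hint A hAI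
          refine ⟨i, rfl, ?_⟩
          by_contra hcon
          push_neg at hcon
          have hdisj : Disjoint (Finset.Ico i (i + k)) (Finset.Ico (m - k) m) :=
            hpd hAI hmem hne
          have hx : i + k - 1 ∈ Finset.Ico i (i + k) := Finset.mem_Ico.2 (by omega)
          have hx2 : i + k - 1 ∈ Finset.Ico (m - k) m := Finset.mem_Ico.2 (by omega)
          exact Finset.disjoint_left.1 hdisj hx hx2
        · rintro I hI
          rw [mem_intervalsF] at hI
          obtain ⟨hcard, hint, hpd⟩ := hI
          have hnotmem : Finset.Ico (m - k) m ∉ I := by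
            intro hmem
            obtain ⟨i, hAe, hb⟩ := hint _ hmem
            have hmk : m - k + k = m := by omega
            have hAe' : Finset.Ico (m - k) (m - k + k) = Finset.Ico i (i + k) := by
              rw [hmk]; exact hAe
            have := Ico_start_eq hk hAe'
            omega
          rw [Finset.mem_filter, mem_intervalsF]
          refine ⟨⟨by rw [Finset.card_insert_of_notMem hnotmem, hcard], fun A hA => ?_, ?_⟩,
            Finset.mem_insert_self _ _⟩
          · rcases Finset.mem_insert.1 hA with rfl | hA
            · exact ⟨m - k, by rw [Nat.sub_add_cancel hm], by omega⟩
            · obtain ⟨i, rfl, hb⟩ := hint A hA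
              exact ⟨i, rfl, by omega⟩
          · rw [Finset.coe_insert, Set.pairwiseDisjoint_insert]
            refine ⟨hpd, fun A hA _ => ?_⟩
            obtain ⟨i, rfl, hb⟩ := hint A hA
            simp only [id_eq]
            rw [Finset.disjoint_left]
            intro x hx1 hx2
            rw [Finset.mem_Ico] at hx1 hx2
            omega
      rw [h1] at hsplit
      rw [← hsplit, h2, IH (m - 1) (by omega) (j + 1), IH (m - k) (by omega) j]
      -- arithmetic
      obtain ⟨K, hK⟩ : ∃ K, k - 1 = K := ⟨_, rfl⟩
      obtain ⟨t, ht⟩ : ∃ t, j * K = t := ⟨_, rfl⟩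
      have hkK : k = K + 1 := by omega
      have e1 : (j + 1) * (k - 1) = t + K := by rw [hK, add_mul, one_mul, ht]
      have e2 : m - k - j * (k - 1) = m - k - t := by rw [hK, ht]
      rw [e1, e2]
      rcases Nat.lt_or_ge (t + K) m with hcase | hcase
      · have ha : m - (t + K) = (m - 1 - (t + K)) + 1 := by omega
        have hb : m - k - t = m - 1 - (t + K) := by omega
        rw [ha, hb, Nat.choose_succ_succ]
      · have ha : m - (t + K) = 0 := by omega
        have hb : m - 1 - (t + K) = 0 := by omega
        have hj1 : 1 ≤ j := by
          by_contra hj0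
          push_neg at hj0
          interval_cases j
          simp at ht
          omega
        have hc : m - k - t = 0 := by omega
        rw [ha, hb, hc, Nat.choose_eq_zero_of_lt (show (0:ℕ) < j by omega), zero_add]


section helpers

lemma finite_of_subsets {α : Type*} (s : Finset α) (p : Finset α → Prop)
    (hp : ∀ t, p t → t ⊆ s) : Finite {t // p t} := by
  apply Finite.of_injective
    (fun t : {t // p t} => (⟨t.1, Finset.mem_powerset.2 (hp _ t.2)⟩ : {u // u ∈ s.powerset}))
  intro a b hab
  have := congrArg Subtype.val hab
  exact Subtype.ext this

lemma card_sigma_const {ι : Type*} [Finite ι] (f : ι → Type*) [∀ i, Finite (f i)] (c : ℕ)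
    (h : ∀ i, Nat.card (f i) = c) : Nat.card (Σ i, f i) = Nat.card ι * c := by
  cases nonempty_fintype ι
  haveI : ∀ i, Fintype (f i) := fun i => Fintype.ofFinite _
  rw [Nat.card_eq_fintype_card, Nat.card_eq_fintype_card, Fintype.card_sigma]
  have h2 : ∀ i, Fintype.card (f i) = c := fun i => by rw [← Nat.card_eq_fintype_card, h]
  simp only [h2, Finset.sum_const, Finset.card_univ, smul_eq_mul]

lemma card_ksubsets (s : Finset ℕ) (x : ℕ) (hx : x ∈ s) (k : ℕ) (hk : 1 ≤ k) :
    Nat.card {B : Finset ℕ // B ⊆ s ∧ x ∈ B ∧ B.card = k} = (s.card - 1).choose (k - 1) := by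
  classical
  have h1 : Nat.card {B : Finset ℕ // B ⊆ s ∧ x ∈ B ∧ B.card = k}
      = ((s.powerset).filter (fun B => B ⊆ s ∧ x ∈ B ∧ B.card = k)).card := by
    rw [← Nat.card_eq_finsetCard]
    exact Nat.card_congr (Equiv.subtypeEquivRight fun B => by
      simp only [Finset.mem_filter, Finset.mem_powerset]
      tauto)
  rw [h1]
  have h2 : ((s.powerset).filter (fun B => B ⊆ s ∧ x ∈ B ∧ B.card = k)).card
      = ((s.erase x).powersetCard (k - 1)).card := by
    apply Finset.card_bij' (fun B _ => B.erase x) (fun C _ => insert x C)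
    · intro B hB
      rw [Finset.mem_filter] at hB
      exact Finset.insert_erase hB.2.2.1
    · intro C hC
      rw [Finset.mem_powersetCard] at hC
      exact Finset.erase_insert (fun hxC => (Finset.mem_erase.1 (hC.1 hxC)).1 rfl)
    · intro B hB
      rw [Finset.mem_filter] at hB
      obtain ⟨-, hBs, hxB, hBk⟩ := hB
      rw [Finset.mem_powersetCard]
      constructor
      · exact fun y hy => Finset.mem_erase.2
          ⟨(Finset.mem_erase.1 hy).1, hBs (Finset.mem_erase.1 hy).2⟩
      · rw [Finset.card_erase_of_mem hxB, hBk]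
    · intro C hC
      rw [Finset.mem_powersetCard] at hC
      obtain ⟨hCs, hCk⟩ := hC
      have hxC : x ∉ C := fun hxC => (Finset.mem_erase.1 (hCs hxC)).1 rfl
      rw [Finset.mem_filter]
      have hsub : insert x C ⊆ s := by
        intro y hy
        rcases Finset.mem_insert.1 hy with rfl | hy
        · exact hx
        · exact (Finset.mem_erase.1 (hCs hy)).2
      refine ⟨Finset.mem_powerset.2 hsub, hsub, Finset.mem_insert_self _ _, ?_⟩
      rw [Finset.card_insert_of_notMem hxC, hCk]
      omega
  rw [h2, Finset.card_powersetCard, Finset.card_erase_of_mem hx]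

end helpers

lemma lemA (k : ℕ) (hk : 1 ≤ k) : ∀ (q : ℕ) (s : Finset ℕ), s.card = k * q →
    Nat.card {P : Finpartition s // ∀ B ∈ P.parts, B.card = k} *
      (Nat.factorial k ^ q * Nat.factorial q) = Nat.factorial (k * q) := by
  intro q
  induction q with
  | zero =>
    intro s hs
    rw [Nat.mul_zero] at hs ⊢
    rw [Finset.card_eq_zero] at hs
    subst hs
    have hall : ∀ P : Finpartition (∅ : Finset ℕ), (∀ B ∈ P.parts, B.card = k) := by
      intro P B hB
      rw [Finpartition.parts_eq_empty_iff.2 Finset.bot_eq_empty.symm] at hB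
      exact absurd hB (Finset.notMem_empty _)
    rw [Nat.card_congr (Equiv.subtypeUnivEquiv hall)]
    have h1 : Nat.card (Finpartition (∅ : Finset ℕ)) = 1 := by
      rw [Nat.card_eq_one_iff_unique]
      refine ⟨⟨fun P Q => Finpartition.ext ?_⟩, ⟨⊥⟩⟩
      rw [Finpartition.parts_eq_empty_iff.2 Finset.bot_eq_empty.symm,
        Finpartition.parts_eq_empty_iff.2 Finset.bot_eq_empty.symm]
    rw [h1]
    simp [Nat.factorial]
  | succ q IH =>
    intro s hs
    have hkq : k * (q + 1) = k * q + k := by ring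
    have hpos : 0 < s.card := by rw [hs]; omega
    have hxmem : s.min' (Finset.card_pos.1 hpos) ∈ s := Finset.min'_mem _ _
    set x := s.min' (Finset.card_pos.1 hpos) with hxdef
    clear_value x
    -- the bijection
    let Base := {B : Finset ℕ // B ⊆ s ∧ x ∈ B ∧ B.card = k}
    let Fib : Base → Type := fun B => {Q : Finpartition (s \ B.1) // ∀ C ∈ Q.parts, C.card = k}
    have hsupB : ∀ B : Base, ({B.1} : Finset (Finset ℕ)).sup id = B.1 := by
      intro B; rw [Finset.sup_singleton]; rfl
    let Φ : (Σ B : Base, Fib B) → {P : Finpartition s // ∀ B ∈ P.parts, B.card = k} :=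
      fun z =>
        ⟨addParts {z.1.1} (z.2.1.copy (by rw [hsupB]))
          (by rw [hsupB]; exact z.1.2.1)
          (by simp [Set.pairwiseDisjoint_singleton])
          (by
            intro A hA
            rw [Finset.mem_singleton] at hA
            subst hA
            intro hAe
            have := z.1.2.2.2
            rw [hAe] at this
            simp at this
            omega),
          by
            intro C hC
            rcases Finset.mem_union.1 hC with hC | hC
            · exact z.2.2 C hC
            · rw [Finset.mem_singleton] at hC
              subst hC
              exact z.1.2.2.2⟩
    have hbij : Function.Bijective Φ := by
      constructor
      · rintro ⟨⟨B, hB⟩, ⟨Q, hQ⟩⟩ ⟨⟨B', hB'⟩, ⟨Q', hQ'⟩⟩ heq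
        have hp := congrArg (fun z => (Subtype.val z).parts) heq
        simp only [Φ, addParts_parts, Finpartition.copy_parts] at hp
        -- first components agree
        have hBeq : B = B' := by
          have hmem1 : B ∈ (Q.parts ∪ {B} : Finset (Finset ℕ)) :=
            Finset.mem_union_right _ (Finset.mem_singleton_self _)
          have hmem2 : B' ∈ (Q.parts ∪ {B} : Finset (Finset ℕ)) := by
            rw [hp]; exact Finset.mem_union_right _ (Finset.mem_singleton_self _)
          -- both contain x and both are parts of the same partition
          have h1 := (Φ ⟨⟨B, hB⟩, ⟨Q, hQ⟩⟩).1
          refine Finpartition.eq_of_mem_parts (Φ ⟨⟨B, hB⟩, ⟨Q, hQ⟩⟩).1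
            (t := B) (u := B') ?_ ?_ hB.2.1 hB'.2.1
          · exact hmem1
          · show B' ∈ (Q.parts ∪ {B} : Finset (Finset ℕ)); rw [hp]
            exact Finset.mem_union_right _ (Finset.mem_singleton_self _)
        subst hBeq
        have hQeq : Q = Q' := by
          apply Finpartition.ext
          have d1 : Disjoint Q.parts ({B} : Finset (Finset ℕ)) := by
            have := parts_disjoint_of_compl (s := s) {B} (Q.copy (by rw [hsupB ⟨B, hB⟩]))
            simpa using this
          have d2 : Disjoint Q'.parts ({B} : Finset (Finset ℕ)) := by
            have := parts_disjoint_of_compl (s := s) {B} (Q'.copy (by rw [hsupB ⟨B, hB'⟩]))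
            simpa using this
          have := congrArg (fun t => t \ ({B} : Finset (Finset ℕ))) hp
          simpa only [Finset.union_sdiff_cancel_right d1, Finset.union_sdiff_cancel_right d2] using this
        subst hQeq
        rfl
      · rintro ⟨P, hP⟩
        have hBmem := P.part_mem.2 hxmem
        have hxB := P.mem_part hxmem
        have hBs : P.part x ⊆ s := P.le hBmem
        have hBk := hP _ hBmem
        have hsub : ({P.part x} : Finset (Finset ℕ)) ⊆ P.parts :=
          Finset.singleton_subset_iff.2 hBmem
        refine ⟨⟨⟨P.part x, hBs, hxB, hBk⟩,
          ⟨(remParts P {P.part x} hsub).copy (by rw [Finset.sup_singleton]; rfl), ?_⟩⟩, ?_⟩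
        · intro C hC
          have : C ∈ P.parts \ {P.part x} := hC
          exact hP _ (Finset.mem_sdiff.1 this).1
        · apply Subtype.ext
          apply Finpartition.ext
          show (P.parts \ {P.part x}) ∪ {P.part x} = P.parts
          exact Finset.sdiff_union_of_subset hsub
    -- counting
    haveI hfinB : Finite Base := finite_of_subsets s _ (fun t ht => ht.1)
    haveI hfinF : ∀ B : Base, Finite (Fib B) := fun B => by
      classical
      infer_instance
    set c0 : ℕ := Nat.factorial k ^ q * Nat.factorial q with hc0
    have hc0pos : 0 < c0 := Nat.mul_pos (pow_pos (Nat.factorial_pos k) _) (Nat.factorial_pos q)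
    set a : ℕ := k * q with ha
    have hdvd : c0 ∣ Nat.factorial a := by
      refine ⟨Nat.card {P : Finpartition (Finset.range a) // ∀ B ∈ P.parts, B.card = k}, ?_⟩
      rw [mul_comm]
      exact (IH (Finset.range a) (by simp [ha])).symm
    have hfib : ∀ B : Base, Nat.card (Fib B) = Nat.factorial a / c0 := by
      intro B
      have hcard : (s \ B.1).card = k * q := by
        rw [Finset.card_sdiff_of_subset B.2.1, hs, B.2.2.2]
        omega
      have := IH (s \ B.1) hcard
      exact (Nat.div_eq_of_eq_mul_left hc0pos this.symm).symm
    have hNcard : Nat.card {P : Finpartition s // ∀ B ∈ P.parts, B.card = k}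
        = Nat.card Base * (Nat.factorial a / c0) := by
      rw [Nat.card_congr (Equiv.ofBijective Φ hbij).symm]
      exact card_sigma_const Fib _ hfib
    have hBase : Nat.card Base = (a + k - 1).choose (k - 1) := by
      rw [card_ksubsets s x hxmem k hk, hs, hkq]
    rw [hNcard, hBase]
    -- pure arithmetic
    have key : (a + k - 1).choose (k - 1) * Nat.factorial (k - 1) * Nat.factorial a
        = Nat.factorial (a + k - 1) := by
      have h := Nat.choose_mul_factorial_mul_factorial (show k - 1 ≤ a + k - 1 by omega)
      rwa [show a + k - 1 - (k - 1) = a by omega] at h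
    have hfk : k * Nat.factorial (k - 1) = Nat.factorial k := Nat.mul_factorial_pred (by omega)
    have hfa : (a + k) * Nat.factorial (a + k - 1) = Nat.factorial (a + k) := by
      have := Nat.mul_factorial_pred (n := a + k) (by omega)
      rwa [show a + k - 1 = a + k - 1 from rfl] at this
    rw [hkq]
    rw [pow_succ, Nat.factorial_succ]
    have expand : (a + k - 1).choose (k - 1) * (Nat.factorial a / c0) *
          (Nat.factorial k ^ q * Nat.factorial k * ((q + 1) * Nat.factorial q))
        = ((a + k - 1).choose (k - 1) * Nat.factorial k * (q + 1)) *
          ((Nat.factorial a / c0) * c0) := by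
      rw [hc0]; ring
    rw [expand, Nat.div_mul_cancel hdvd, ← hfk, ← hfa, ← key]
    have hlin : k * (q + 1) = a + k := by rw [ha]; ring
    rw [← hlin]
    ring

/-- Counting pairs (linear `k`-chord diagram of length `k*n`, set of `j` short chords of
that diagram): the total equals `((k(n-j))! / ((k!)^{n-j} (n-j)!)) * C(kn - j(k-1), j)`,
stated in multiplied form. A short chord is a block of `k` consecutive vertices. -/
theorem stmt2 (k n j : ℕ) (hk : 1 ≤ k) (hj : j ≤ n) :
    Nat.card {PS : Finpartition (Finset.range (k * n)) × Finset (Finset ℕ) //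
        (∀ B ∈ PS.1.parts, B.card = k) ∧
        PS.2 ⊆ PS.1.parts ∧ PS.2.card = j ∧
        ∀ A ∈ PS.2, ∃ i, A = Finset.Ico i (i + k)} *
      (Nat.factorial k ^ (n - j) * Nat.factorial (n - j))
    = Nat.factorial (k * (n - j)) * Nat.choose (k * n - j * (k - 1)) j := by
  classical
  let Base := {I : Finset (Finset ℕ) // GoodI k (k * n) j I}
  let Fib : Base → Type := fun I =>
    {Q : Finpartition (Finset.range (k * n) \ I.1.sup id) // ∀ B ∈ Q.parts, B.card = k}
  have hsup : ∀ I : Base, I.1.sup id ⊆ Finset.range (k * n) := by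
    intro I
    show I.1.sup id ≤ Finset.range (k * n)
    apply Finset.sup_le
    intro A hA
    obtain ⟨i, rfl, hb⟩ := I.2.2.1 A hA
    show Finset.Ico i (i + k) ⊆ Finset.range (k * n)
    rw [Finset.range_eq_Ico]
    exact Finset.Ico_subset_Ico (Nat.zero_le _) hb
  have hne : ∀ I : Base, ∀ A ∈ I.1, A ≠ ∅ := by
    intro I A hA
    obtain ⟨i, rfl, hb⟩ := I.2.2.1 A hA
    rw [← Finset.nonempty_iff_ne_empty]
    exact Finset.nonempty_Ico.2 (by omega)
  let Φ : (Σ I : Base, Fib I) → {PS : Finpartition (Finset.range (k * n)) × Finset (Finset ℕ) //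
      (∀ B ∈ PS.1.parts, B.card = k) ∧
      PS.2 ⊆ PS.1.parts ∧ PS.2.card = j ∧
      ∀ A ∈ PS.2, ∃ i, A = Finset.Ico i (i + k)} :=
    fun z =>
      ⟨(addParts z.1.1 z.2.1 (hsup z.1) z.1.2.2.2 (hne z.1), z.1.1), by
        refine ⟨?_, Finset.subset_union_right, z.1.2.1,
          fun A hA => (z.1.2.2.1 A hA).imp (fun i h => h.1)⟩
        intro B hB
        rcases Finset.mem_union.1 hB with hB | hB
        · exact z.2.2 B hB
        · obtain ⟨i, rfl, hb⟩ := z.1.2.2.1 B hB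
          rw [Nat.card_Ico]
          omega⟩
  have hbij : Function.Bijective Φ := by
    constructor
    · rintro ⟨⟨T, hT⟩, ⟨Q, hQ⟩⟩ ⟨⟨T', hT'⟩, ⟨Q', hQ'⟩⟩ heq
      have h2 : T = T' := congrArg (fun z => (Subtype.val z).2) heq
      subst h2
      have hp : Q.parts ∪ T = Q'.parts ∪ T := by
        have := congrArg (fun z => (Subtype.val z).1.parts) heq
        simpa [Φ, addParts_parts] using this
      have hQeq : Q = Q' := by
        apply Finpartition.ext
        have d1 := parts_disjoint_of_compl (s := Finset.range (k * n)) T Q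
        have d2 := parts_disjoint_of_compl (s := Finset.range (k * n)) T Q'
        have := congrArg (fun t => t \ T) hp
        simpa [Finset.union_sdiff_cancel_right d1, Finset.union_sdiff_cancel_right d2] using this
      subst hQeq
      rfl
    · rintro ⟨⟨P, T⟩, hP, hsub, hcard, hico⟩
      have hgood : GoodI k (k * n) j T := by
        refine ⟨hcard, ?_, P.disjoint.subset (Finset.coe_subset.2 hsub)⟩
        intro A hA
        obtain ⟨i, rfl⟩ := hico A hA
        refine ⟨i, rfl, ?_⟩
        have hmem : i + k - 1 ∈ Finset.Ico i (i + k) := Finset.mem_Ico.2 (by omega)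
        have := P.le (hsub hA) hmem
        rw [Finset.mem_range] at this
        omega
      refine ⟨⟨⟨T, hgood⟩, ⟨remParts P T hsub, fun C hC => hP _ (Finset.mem_sdiff.1 hC).1⟩⟩, ?_⟩
      apply Subtype.ext
      show (addParts T (remParts P T hsub) _ _ _, T) = (P, T)
      have h1 : addParts T (remParts P T hsub) (hsup ⟨T, hgood⟩) hgood.2.2 (hne ⟨T, hgood⟩) = P := by
        apply Finpartition.ext
        exact Finset.sdiff_union_of_subset hsub
      rw [h1]
  haveI hfinB : Finite Base := by
    apply finite_of_subsets ((Finset.range (k * n)).powerset) (GoodI k (k * n) j)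
    intro I hI
    have := mem_intervalsF.2 hI
    rw [intervalsF, Finset.mem_filter] at this
    exact Finset.mem_powerset.1 this.1
  haveI hfinF : ∀ I : Base, Finite (Fib I) := fun I => by infer_instance
  have hc0pos : 0 < Nat.factorial k ^ (n - j) * Nat.factorial (n - j) :=
    Nat.mul_pos (pow_pos (Nat.factorial_pos k) _) (Nat.factorial_pos _)
  have hdvd : Nat.factorial k ^ (n - j) * Nat.factorial (n - j) ∣ Nat.factorial (k * (n - j)) := by
    exact Dvd.intro_left _ (lemA k hk (n - j) (Finset.range (k * (n - j))) (by simp))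
  have hfib : ∀ I : Base, Nat.card (Fib I) =
      Nat.factorial (k * (n - j)) / (Nat.factorial k ^ (n - j) * Nat.factorial (n - j)) := by
    intro I
    have hsupcard : (I.1.sup id).card = j * k := by
      rw [Finset.sup_eq_biUnion I.1 id, Finset.card_biUnion
        (fun A hA B hB hAB => I.2.2.2 hA hB hAB)]
      have : ∀ A ∈ I.1, (id A).card = k := by
        intro A hA
        obtain ⟨i, rfl, hb⟩ := I.2.2.1 A hA
        simp [Nat.card_Ico]
      rw [Finset.sum_congr rfl this, Finset.sum_const, I.2.1, smul_eq_mul]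
    have hcard : (Finset.range (k * n) \ I.1.sup id).card = k * (n - j) := by
      rw [Finset.card_sdiff_of_subset (hsup I), Finset.card_range, hsupcard,
        mul_comm k (n - j), Nat.sub_mul, mul_comm n k, mul_comm j k]
    have := lemA k hk (n - j) _ hcard
    exact (Nat.div_eq_of_eq_mul_left hc0pos this.symm).symm
  have hX : Nat.card {PS : Finpartition (Finset.range (k * n)) × Finset (Finset ℕ) //
      (∀ B ∈ PS.1.parts, B.card = k) ∧
      PS.2 ⊆ PS.1.parts ∧ PS.2.card = j ∧
      ∀ A ∈ PS.2, ∃ i, A = Finset.Ico i (i + k)}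
      = Nat.card Base *
        (Nat.factorial (k * (n - j)) / (Nat.factorial k ^ (n - j) * Nat.factorial (n - j))) := by
    rw [Nat.card_congr (Equiv.ofBijective Φ hbij).symm]
    exact card_sigma_const Fib _ hfib
  have hBase : Nat.card Base = (k * n - j * (k - 1)).choose j := by
    rw [Nat.card_congr (Equiv.subtypeEquivRight (fun I => mem_intervalsF.symm) :
      Base ≃ {I // I ∈ intervalsF k (k * n) j}), Nat.card_eq_finsetCard,
      intervalsF_card k hk (k * n) j]
  rw [hX, hBase, mul_assoc, Nat.div_mul_cancel hdvd, mul_comm]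
end

section
/- The number of linear k-chord diagrams of length kn with no short chord equals the alternating sum over j from 0 to n of (-1)^j · ((k(n-j))! / ((k!)^{n-j} (n-j)!)) · C(kn - j(k-1), j). -/
open Finset

def KPart (k : ℕ) (s : Finset ℕ) (R : Finset (Finset ℕ)) : Prop :=
  R.sup id = s ∧ (∀ B ∈ R, ∀ C ∈ R, B ≠ C → Disjoint B C) ∧ ∀ B ∈ R, B.card = k

lemma finite_of_subset_powerset {α : Type*} [DecidableEq α] {p : Finset α → Prop} (s : Finset α)
    (h : ∀ t, p t → t ⊆ s) : Finite {t : Finset α // p t} :=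
  Finite.of_injective (fun t => (⟨t.1, mem_powerset.2 (h t.1 t.2)⟩ : {u // u ∈ s.powerset}))
    (fun a b hab => Subtype.ext (by simpa [Subtype.ext_iff] using hab))

lemma KPart.block_subset {k s R} (h : KPart k s R) {B} (hB : B ∈ R) : B ⊆ s := by
  rw [← h.1]; exact le_sup (f := id) hB

lemma KPart.subset_powerset {k s R} (h : KPart k s R) : R ⊆ s.powerset :=
  fun B hB => mem_powerset.2 (h.block_subset hB)

lemma finite_KPart {k : ℕ} {s : Finset ℕ} : Finite {R // KPart k s R} :=
  finite_of_subset_powerset s.powerset (fun _ ht => ht.subset_powerset)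


lemma KPart.pairwiseDisjoint {k s R} (h : KPart k s R) :
    (R : Set (Finset ℕ)).PairwiseDisjoint id := fun B hB C hC hne => h.2.1 B hB C hC hne

/-- `KPart` matches `Finpartition`s with all parts of size `k`. -/
noncomputable def kpartEquiv (k : ℕ) (hk : 0 < k) (s : Finset ℕ) :
    {R // KPart k s R} ≃ {P : Finpartition s // ∀ B ∈ P.parts, B.card = k} where
  toFun R := ⟨⟨R.1, Finset.supIndep_iff_pairwiseDisjoint.2 R.2.pairwiseDisjoint, R.2.1,
      fun hbot => by
        have h2 := R.2.2.2 _ hbot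
        simp only [Finset.bot_eq_empty, Finset.card_empty] at h2
        omega⟩,
      R.2.2.2⟩
  invFun P := ⟨P.1.parts, P.1.sup_parts, fun B hB C hC hne => P.1.disjoint hB hC hne, P.2⟩
  left_inv R := rfl
  right_inv P := by ext : 2 <;> rfl

lemma nat_card_sigma {I : Type*} [Fintype I] {f : I → Type*} [∀ i, Finite (f i)] :
    Nat.card (Σ i, f i) = ∑ i : I, Nat.card (f i) := by
  classical
  letI : ∀ i, Fintype (f i) := fun i => Fintype.ofFinite (f i)
  simp [Nat.card_eq_fintype_card]

/-- removing a subfamily of blocks gives a partition of the complement -/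
lemma KPart.sup_sdiff {k s R} (h : KPart k s R) {J} (hJ : J ⊆ R) :
    (R \ J).sup id = s \ J.sup id := by
  ext a
  simp only [Finset.mem_sup, mem_sdiff, id_eq]
  constructor
  · rintro ⟨C, hC, haC⟩
    obtain ⟨hCR, hCJ⟩ := hC
    refine ⟨h.block_subset hCR haC, ?_⟩
    rintro ⟨D, hD, haD⟩
    rcases eq_or_ne C D with rfl | hne
    · exact hCJ hD
    · exact absurd haD (Finset.disjoint_left.1 (h.2.1 C hCR D (hJ hD) hne) haC)
  · rintro ⟨has, hnJ⟩
    have : a ∈ R.sup id := h.1.symm ▸ has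
    rcases Finset.mem_sup.1 this with ⟨C, hC, haC⟩
    exact ⟨C, ⟨hC, fun hCJ => hnJ ⟨C, hCJ, haC⟩⟩, haC⟩

lemma kpart_count (k : ℕ) (hk : 0 < k) :
    ∀ (r : ℕ) (s : Finset ℕ), s.card = k * r →
      Nat.card {R // KPart k s R} * (k.factorial ^ r * r.factorial) = (k * r).factorial := by
  intro r
  induction r with
  | zero =>
    intro s hs
    rw [Nat.mul_zero, Finset.card_eq_zero] at hs
    subst hs
    have hcard : Nat.card {R // KPart k ∅ R} = 1 := by
      rw [Nat.card_eq_one_iff_unique]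
      constructor
      · constructor
        rintro ⟨R, hR⟩ ⟨R', hR'⟩
        have hRe : ∀ {T : Finset (Finset ℕ)}, KPart k ∅ T → T = ∅ := by
          intro T hT
          rw [Finset.eq_empty_iff_forall_notMem]
          intro B hB
          have h1 : B ⊆ ∅ := hT.block_subset hB
          have h2 := hT.2.2 B hB
          have h3 := Finset.card_le_card h1
          rw [Finset.card_empty, Nat.le_zero] at h3
          rw [h3] at h2; omega
        simp [Subtype.ext_iff, hRe hR, hRe hR']
      · exact ⟨⟨∅, by simp [KPart]⟩⟩
    simp [hcard]
  | succ r ih =>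
    intro s hs
    classical
    have hsne : s.Nonempty := by
      rw [← Finset.card_pos, hs, Nat.mul_succ]; omega
    set x := s.min' hsne with hxdef
    have hxs : x ∈ s := s.min'_mem hsne
    -- the set of candidate blocks through x
    haveI hBfin : Finite {B : Finset ℕ // x ∈ B ∧ B ⊆ s ∧ B.card = k} :=
      finite_of_subset_powerset s (fun t ht => ht.2.1)
    haveI hfibfin : ∀ B : {B : Finset ℕ // x ∈ B ∧ B ⊆ s ∧ B.card = k},
        Finite {R // KPart k (s \ B.val) R} := fun B => finite_KPart
    -- the glueing map
    have hKinsert : ∀ (B : Finset ℕ), x ∈ B → B ⊆ s → B.card = k → ∀ (R : Finset (Finset ℕ)),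
        KPart k (s \ B) R → KPart k s (insert B R) := by
      intro B hxB hBs hBk R hR
      refine ⟨?_, ?_, ?_⟩
      · rw [Finset.sup_insert, hR.1, id_eq, Finset.sup_eq_union,
          Finset.union_sdiff_of_subset hBs]
      · intro C hC D hD hne
        have hcross : ∀ E ∈ R, Disjoint B E := fun E hE =>
          Finset.disjoint_sdiff.mono_right (Finset.le_iff_subset.2 (hR.block_subset hE))
        rcases Finset.mem_insert.1 hC with rfl | hC'
        · rcases Finset.mem_insert.1 hD with rfl | hD'
          · exact absurd rfl hne
          · exact hcross D hD'
        · rcases Finset.mem_insert.1 hD with rfl | hD'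
          · exact (hcross C hC').symm
          · exact hR.2.1 C hC' D hD' hne
      · intro C hC
        rcases Finset.mem_insert.1 hC with rfl | hC
        · exact hBk
        · exact hR.2.2 C hC
    have hnotmem : ∀ (B : Finset ℕ), x ∈ B → ∀ (R : Finset (Finset ℕ)),
        KPart k (s \ B) R → B ∉ R := by
      intro B hxB R hR hmem
      have := hR.block_subset hmem hxB
      simp at this
      exact this.2 hxB
    set g : (Σ B : {B : Finset ℕ // x ∈ B ∧ B ⊆ s ∧ B.card = k},
        {R // KPart k (s \ B.val) R}) → {R // KPart k s R} :=
      fun p => ⟨insert p.1.val p.2.val,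
        hKinsert p.1.val p.1.2.1 p.1.2.2.1 p.1.2.2.2 p.2.val p.2.2⟩ with hgdef
    have hginj : Function.Injective g := by
      rintro ⟨⟨B, hxB, hBs, hBk⟩, ⟨R, hR⟩⟩ ⟨⟨B', hxB', hBs', hBk'⟩, ⟨R', hR'⟩⟩ heq
      simp only [hgdef, Subtype.mk_eq_mk] at heq
      have hBB' : B = B' := by
        have hmem : B ∈ insert B' R' := by rw [← heq]; exact Finset.mem_insert_self _ _
        rcases Finset.mem_insert.1 hmem with h | h
        · exact h
        · have := hR'.block_subset h hxB
          simp at this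
          exact absurd hxB' this.2
      subst hBB'
      have hRR' : R = R' := by
        have h1 : B ∉ R := hnotmem B hxB R hR
        have h2 : B ∉ R' := hnotmem B hxB' R' hR'
        rw [← Finset.erase_insert h1, ← Finset.erase_insert h2, heq]
      subst hRR'
      rfl
    have hgsurj : Function.Surjective g := by
      rintro ⟨R, hR⟩
      have hx' : x ∈ R.sup id := by rw [hR.1]; exact hxs
      rcases Finset.mem_sup.1 hx' with ⟨B, hBR, hxB⟩
      have hB : x ∈ B ∧ B ⊆ s ∧ B.card = k := ⟨hxB, hR.block_subset hBR, hR.2.2 B hBR⟩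
      have herase : KPart k (s \ B) (R.erase B) := by
        refine ⟨?_, ?_, ?_⟩
        · rw [Finset.erase_eq]
          rw [hR.sup_sdiff (Finset.singleton_subset_iff.2 hBR), Finset.sup_singleton, id_eq]
        · intro C hC D hD hne
          exact hR.2.1 C (Finset.mem_of_mem_erase hC) D (Finset.mem_of_mem_erase hD) hne
        · intro C hC
          exact hR.2.2 C (Finset.mem_of_mem_erase hC)
      refine ⟨⟨⟨B, hB⟩, ⟨R.erase B, herase⟩⟩, ?_⟩
      simp only [hgdef]
      exact Subtype.ext (Finset.insert_erase hBR)
    -- counting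
    letI := Fintype.ofFinite {B : Finset ℕ // x ∈ B ∧ B ⊆ s ∧ B.card = k}
    have hcount : Nat.card {R // KPart k s R}
        = ∑ B : {B : Finset ℕ // x ∈ B ∧ B ⊆ s ∧ B.card = k},
            Nat.card {R // KPart k (s \ B.val) R} := by
      rw [← Nat.card_eq_of_bijective g ⟨hginj, hgsurj⟩, nat_card_sigma]
    have hfib : ∀ B : {B : Finset ℕ // x ∈ B ∧ B ⊆ s ∧ B.card = k},
        Nat.card {R // KPart k (s \ B.val) R} * (k.factorial ^ r * r.factorial)
          = (k * r).factorial := by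
      intro B
      apply ih
      rw [Finset.card_sdiff_of_subset B.2.2.1, hs, B.2.2.2, Nat.mul_succ, Nat.add_sub_cancel]
    -- number of candidate blocks
    have hNB : Nat.card {B : Finset ℕ // x ∈ B ∧ B ⊆ s ∧ B.card = k}
        = Nat.choose (k * r + k - 1) (k - 1) := by
      have e2 : {B : Finset ℕ // x ∈ B ∧ B ⊆ s ∧ B.card = k}
          ≃ {C // C ∈ (s.erase x).powersetCard (k - 1)} :=
        { toFun := fun B => ⟨B.val.erase x, Finset.mem_powersetCard.2
            ⟨Finset.erase_subset_erase x B.2.2.1,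
             by rw [Finset.card_erase_of_mem B.2.1, B.2.2.2]⟩⟩
          invFun := fun C => ⟨insert x C.val, Finset.mem_insert_self _ _,
            Finset.insert_subset hxs ((Finset.mem_powersetCard.1 C.2).1.trans
              (Finset.erase_subset _ _)),
            by
              have hxC : x ∉ C.val := fun hxC =>
                (Finset.mem_erase.1 ((Finset.mem_powersetCard.1 C.2).1 hxC)).1 rfl
              rw [Finset.card_insert_of_notMem hxC, (Finset.mem_powersetCard.1 C.2).2]
              omega⟩
          left_inv := by
            rintro ⟨B, hxB, hBs, hBk⟩
            exact Subtype.ext (Finset.insert_erase hxB)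
          right_inv := by
            rintro ⟨C, hC⟩
            apply Subtype.ext
            exact Finset.erase_insert (fun hxC =>
              (Finset.mem_erase.1 ((Finset.mem_powersetCard.1 hC).1 hxC)).1 rfl) }
      rw [Nat.card_congr e2, Nat.card_eq_finsetCard, Finset.card_powersetCard,
        Finset.card_erase_of_mem hxs, hs]
      rw [Nat.mul_succ k r]
    -- final arithmetic
    rw [hcount, Finset.sum_mul]
    have hterm : ∀ B : {B : Finset ℕ // x ∈ B ∧ B ⊆ s ∧ B.card = k},
        Nat.card {R // KPart k (s \ B.val) R} * (k.factorial ^ (r+1) * (r+1).factorial)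
          = (k * r).factorial * (k.factorial * (r+1)) := by
      intro B
      have h1 := hfib B
      calc Nat.card {R // KPart k (s \ B.val) R} * (k.factorial ^ (r+1) * (r+1).factorial)
          = (Nat.card {R // KPart k (s \ B.val) R} * (k.factorial ^ r * r.factorial))
              * (k.factorial * (r+1)) := by
            rw [pow_succ, Nat.factorial_succ]; ring
        _ = (k * r).factorial * (k.factorial * (r+1)) := by rw [h1]
    rw [Finset.sum_congr rfl (fun B _ => hterm B), Finset.sum_const, Finset.card_univ,
      smul_eq_mul]
    have hcardB : Fintype.card {B : Finset ℕ // x ∈ B ∧ B ⊆ s ∧ B.card = k}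
        = (k * r + k - 1).choose (k - 1) := by
      rw [← Nat.card_eq_fintype_card, hNB]
    rw [hcardB]
    obtain ⟨K, rfl⟩ : ∃ K, k = K + 1 := ⟨k - 1, by omega⟩
    have h2 := Nat.choose_mul_factorial_mul_factorial
      (show K ≤ (K+1) * r + K by omega)
    have h3 : (K+1) * r + K - K = (K+1) * r := by omega
    rw [h3] at h2
    have h4 : (K+1) * r + (K+1) - 1 = (K+1)*r + K := by omega
    have h5 : (K+1) * (r+1) = ((K+1)*r + K) + 1 := by ring
    rw [Nat.add_sub_cancel, h4, h5, Nat.factorial_succ ((K+1)*r + K), ← h2,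
      Nat.factorial_succ K]
    ring


/-- finsets of size `j` correspond to strictly monotone tuples -/
noncomputable def finsetTuple (j : ℕ) :
    {S : Finset ℕ // S.card = j} ≃ {f : Fin j → ℕ // StrictMono f} where
  toFun S := ⟨S.1.orderEmbOfFin S.2, (S.1.orderEmbOfFin S.2).strictMono⟩
  invFun f := ⟨Finset.image f.1 Finset.univ, by
    rw [Finset.card_image_of_injective _ f.2.injective, Finset.card_univ, Fintype.card_fin]⟩
  left_inv S := by
    apply Subtype.ext
    ext a
    simp only [Finset.mem_image, Finset.mem_univ, true_and]
    constructor
    · rintro ⟨i, rfl⟩; exact Finset.orderEmbOfFin_mem _ _ _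
    · intro ha
      have : a ∈ Set.range (S.1.orderEmbOfFin S.2) := by
        rw [Finset.range_orderEmbOfFin]; exact ha
      rcases this with ⟨i, hi⟩; exact ⟨i, hi⟩
  right_inv f := by
    apply Subtype.ext
    exact (Finset.orderEmbOfFin_unique _
      (fun x => Finset.mem_image.2 ⟨x, Finset.mem_univ x, rfl⟩) f.2).symm

lemma finsetTuple_mem {j : ℕ} (S : {S : Finset ℕ // S.card = j}) (a : ℕ) :
    a ∈ S.1 ↔ ∃ i, (finsetTuple j S).1 i = a := by
  constructor
  · intro ha
    have : a ∈ Set.range (S.1.orderEmbOfFin S.2) := by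
      rw [Finset.range_orderEmbOfFin]; exact ha
    rcases this with ⟨i, hi⟩; exact ⟨i, hi⟩
  · rintro ⟨i, rfl⟩; exact Finset.orderEmbOfFin_mem _ _ _

/-- transfer a predicate through `finsetTuple` -/
noncomputable def finsetTupleCond (j : ℕ) (P : Finset ℕ → Prop) (P' : (Fin j → ℕ) → Prop)
    (h : ∀ S : {S : Finset ℕ // S.card = j}, P S.1 ↔ P' (finsetTuple j S).1) :
    {S : Finset ℕ // S.card = j ∧ P S} ≃ {f : Fin j → ℕ // StrictMono f ∧ P' f} :=
  ((Equiv.subtypeSubtypeEquivSubtypeInter _ _).symm.trans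
    ((finsetTuple j).subtypeEquiv (fun S => h S))).trans
    (Equiv.subtypeSubtypeEquivSubtypeInter _ _)

lemma gaps_ge {k j : ℕ} (g : Fin j → ℕ)
    (hg : ∀ i i' : Fin j, i < i' → g i + k ≤ g i') :
    ∀ (t : ℕ) (ht : t < j), t * k ≤ g ⟨t, ht⟩ := by
  intro t
  induction t with
  | zero => intro ht; simp
  | succ t iht =>
    intro ht
    have h1 : t < j := by omega
    have h2 : (⟨t, h1⟩ : Fin j) < ⟨t + 1, ht⟩ := by simp [Fin.lt_def]
    have h3 := hg _ _ h2
    have h4 := iht h1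
    have : (t + 1) * k = t * k + k := by ring
    omega


lemma strictMono_of_consecutive {j : ℕ} (f : Fin j → ℕ)
    (h : ∀ (t : ℕ) (ht : t + 1 < j), f ⟨t, Nat.lt_of_succ_lt ht⟩ < f ⟨t + 1, ht⟩) :
    StrictMono f := by
  have key : ∀ (b : ℕ) (hb : b < j) (a : ℕ) (ha : a < j), a < b → f ⟨a, ha⟩ < f ⟨b, hb⟩ := by
    intro b
    induction b with
    | zero => intro hb a ha hab; omega
    | succ b ihb =>
      intro hb a ha hab
      rcases Nat.lt_or_ge a b with h' | h'
      · exact (ihb (by omega) a ha h').trans (h b hb)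
      · have : a = b := by omega
        subst this
        exact h a hb
  intro i i' hii
  have := key i'.1 i'.2 i.1 i.2 hii
  simpa using this

/-- the shift bijection between strictly monotone tuples below `m - j*(k-1)`
and tuples of starts of `j` disjoint length-`k` intervals in `[0, m)`. -/
noncomputable def shiftEquiv (k m j : ℕ) (hk : 0 < k) :
    {f : Fin j → ℕ // StrictMono f ∧ ∀ i, f i < m - j * (k - 1)}
      ≃ {g : Fin j → ℕ // StrictMono g ∧ (∀ i, g i + k ≤ m) ∧
          (∀ i i' : Fin j, i < i' → g i + k ≤ g i')} where
  toFun f := ⟨fun i => f.1 i + i.1 * (k - 1), by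
    obtain ⟨f, hmono, hlt⟩ := f
    have key : ∀ i i' : Fin j, i < i' →
        f i + i.1 * (k - 1) + k ≤ f i' + i'.1 * (k - 1) := by
      intro i i' hii
      have h1 : f i < f i' := hmono hii
      have h2 : (i.1 + 1) ≤ i'.1 := hii
      have h3 : (i.1 + 1) * (k - 1) ≤ i'.1 * (k - 1) := Nat.mul_le_mul_right _ h2
      have h4 : (i.1 + 1) * (k - 1) = i.1 * (k - 1) + (k - 1) := by ring
      omega
    refine ⟨?_, ?_, key⟩
    · intro i i' hii
      have := key i i' hii
      dsimp only
      omega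
    · intro i
      dsimp only
      have h1 := hlt i
      have h2 : (i.1 + 1) ≤ j := i.2
      have h3 : (i.1 + 1) * (k - 1) ≤ j * (k - 1) := Nat.mul_le_mul_right _ h2
      have h4 : (i.1 + 1) * (k - 1) = i.1 * (k - 1) + (k - 1) := by ring
      omega⟩
  invFun g := ⟨fun i => g.1 i - i.1 * (k - 1), by
    obtain ⟨g, hmono, hbd, hgap⟩ := g
    have hge : ∀ i : Fin j, i.1 * k ≤ g i := fun i => gaps_ge g hgap i.1 i.2
    have hA : ∀ i : Fin j, i.1 * (k - 1) ≤ i.1 * k :=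
      fun i => Nat.mul_le_mul_left _ (by omega)
    have hcons : ∀ (t : ℕ) (ht : t + 1 < j),
        g ⟨t, Nat.lt_of_succ_lt ht⟩ - t * (k - 1) < g ⟨t + 1, ht⟩ - (t + 1) * (k - 1) := by
      intro t ht
      have h1 := hgap ⟨t, Nat.lt_of_succ_lt ht⟩ ⟨t + 1, ht⟩ (by simp [Fin.lt_def])
      have h2 := gaps_ge g hgap t (Nat.lt_of_succ_lt ht)
      have h3 : t * (k - 1) ≤ t * k := Nat.mul_le_mul_left _ (by omega)
      have h4 : (t + 1) * (k - 1) = t * (k - 1) + (k - 1) := by ring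
      omega
    have hmono' : StrictMono (fun i : Fin j => g i - i.1 * (k - 1)) := by
      apply strictMono_of_consecutive
      intro t ht
      exact hcons t ht
    refine ⟨hmono', ?_⟩
    intro i
    have hj : 0 < j := i.pos
    set l : Fin j := ⟨j - 1, by omega⟩ with hl
    have hle : i ≤ l := by
      have := i.2
      simp [hl, Fin.le_def]
      omega
    have h1 : g i - i.1 * (k - 1) ≤ g l - l.1 * (k - 1) := hmono'.monotone hle
    have hl1 : (l.1 : ℕ) = j - 1 := rfl
    have h2 : g l + k ≤ m := hbd l
    have h3 := hge l
    have h4 : l.1 * (k - 1) ≤ l.1 * k := Nat.mul_le_mul_left _ (by omega)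
    have h5 : l.1 * (k - 1) + (k - 1) = j * (k - 1) := by
      have : (l.1 + 1) * (k - 1) = l.1 * (k - 1) + (k - 1) := by ring
      have hj1 : l.1 + 1 = j := by simp [hl]; omega
      rw [← this, hj1]
    dsimp only
    omega⟩
  left_inv f := by
    apply Subtype.ext
    funext i
    simp only
    omega
  right_inv g := by
    apply Subtype.ext
    funext i
    obtain ⟨g, hmono, hbd, hgap⟩ := g
    have hge : i.1 * k ≤ g i := gaps_ge g hgap i.1 i.2
    have hA : i.1 * (k - 1) ≤ i.1 * k := Nat.mul_le_mul_left _ (by omega)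
    simp only
    omega

lemma starts_count (k m j : ℕ) (hk : 0 < k) :
    Nat.card {S : Finset ℕ // S.card = j ∧ (∀ a ∈ S, a + k ≤ m) ∧
      ∀ a ∈ S, ∀ b ∈ S, a < b → a + k ≤ b} = (m - j * (k - 1)).choose j := by
  set N := m - j * (k - 1) with hN
  have e1 := finsetTupleCond j
    (fun S => (∀ a ∈ S, a + k ≤ m) ∧ ∀ a ∈ S, ∀ b ∈ S, a < b → a + k ≤ b)
    (fun f => (∀ i, f i + k ≤ m) ∧ ∀ i i' : Fin j, i < i' → f i + k ≤ f i')
    (by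
      intro S
      constructor
      · rintro ⟨hbd, hgap⟩
        refine ⟨fun i => hbd _ ((finsetTuple_mem S _).2 ⟨i, rfl⟩), fun i i' hii => ?_⟩
        exact hgap _ ((finsetTuple_mem S _).2 ⟨i, rfl⟩) _
          ((finsetTuple_mem S _).2 ⟨i', rfl⟩) ((finsetTuple j S).2 hii)
      · rintro ⟨hbd, hgap⟩
        constructor
        · intro a ha
          obtain ⟨i, rfl⟩ := (finsetTuple_mem S _).1 ha
          exact hbd i
        · intro a ha b hb hab
          obtain ⟨i, rfl⟩ := (finsetTuple_mem S _).1 ha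
          obtain ⟨i', rfl⟩ := (finsetTuple_mem S _).1 hb
          exact hgap i i' (((finsetTuple j S).2.lt_iff_lt).1 hab))
  have e2 := (shiftEquiv k m j hk).symm
  have e3 := (finsetTupleCond j (fun S => ∀ a ∈ S, a < N) (fun f => ∀ i, f i < N)
    (by
      intro S
      constructor
      · intro hbd i
        exact hbd _ ((finsetTuple_mem S _).2 ⟨i, rfl⟩)
      · intro hbd a ha
        obtain ⟨i, rfl⟩ := (finsetTuple_mem S _).1 ha
        exact hbd i)).symm
  have e4 : {S : Finset ℕ // S.card = j ∧ ∀ a ∈ S, a < N}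
      ≃ {C // C ∈ (Finset.range N).powersetCard j} :=
    Equiv.subtypeEquivRight (by
      intro S
      rw [Finset.mem_powersetCard]
      constructor
      · rintro ⟨h1, h2⟩
        exact ⟨fun a ha => Finset.mem_range.2 (h2 a ha), h1⟩
      · rintro ⟨h1, h2⟩
        exact ⟨h2, fun a ha => Finset.mem_range.1 (h1 ha)⟩)
  rw [Nat.card_congr (((e1.trans e2).trans e3).trans e4), Nat.card_eq_finsetCard,
    Finset.card_powersetCard, Finset.card_range]

lemma Ico_k_inj {k : ℕ} (hk : 0 < k) :
    Function.Injective (fun a : ℕ => Finset.Ico a (a + k)) := by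
  intro a b h
  simp only at h
  have ha : a ∈ Finset.Ico a (a + k) := by simp; omega
  have hb : b ∈ Finset.Ico b (b + k) := by simp; omega
  rw [h] at ha
  rw [← h] at hb
  simp only [Finset.mem_Ico] at ha hb
  omega

lemma Ico_k_disj {k a b : ℕ} (h : a + k ≤ b) :
    Disjoint (Finset.Ico a (a + k)) (Finset.Ico b (b + k)) := by
  rw [Finset.disjoint_left]
  intro x hx hx'
  simp only [Finset.mem_Ico] at hx hx'
  omega

lemma U_subset_range {k m : ℕ} {S : Finset ℕ} (h : ∀ a ∈ S, a + k ≤ m) :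
    S.sup (fun a => Finset.Ico a (a + k)) ⊆ Finset.range m := by
  intro x hx
  rcases Finset.mem_sup.1 hx with ⟨a, ha, hxa⟩
  simp only [Finset.mem_Ico] at hxa
  have := h a ha
  simp only [Finset.mem_range]
  omega

lemma sup_image_Ico {k : ℕ} (S : Finset ℕ) :
    (S.image (fun a => Finset.Ico a (a + k))).sup id = S.sup (fun a => Finset.Ico a (a + k)) := by
  rw [Finset.sup_image]
  rfl


lemma glue_prop {k m j : ℕ} (hk : 0 < k) {S : Finset ℕ} (hScard : S.card = j)
    (hbd : ∀ a ∈ S, a + k ≤ m) (hgap : ∀ a ∈ S, ∀ b ∈ S, a < b → a + k ≤ b)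
    {R : Finset (Finset ℕ)}
    (hR : KPart k (Finset.range m \ S.sup (fun a => Finset.Ico a (a + k))) R) :
    KPart k (Finset.range m) (R ∪ S.image (fun a => Finset.Ico a (a + k))) ∧
    S.image (fun a => Finset.Ico a (a + k)) ⊆ R ∪ S.image (fun a => Finset.Ico a (a + k)) ∧
    (∀ B ∈ S.image (fun a => Finset.Ico a (a + k)), ∃ i, B = Finset.Ico i (i + k)) ∧
    (S.image (fun a => Finset.Ico a (a + k))).card = j := by
  have hU : S.sup (fun a => Finset.Ico a (a + k)) ⊆ Finset.range m := U_subset_range hbd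
  have hIcoU : ∀ a ∈ S, Finset.Ico a (a + k) ⊆ S.sup (fun a => Finset.Ico a (a + k)) :=
    fun a ha => Finset.le_sup (f := fun a => Finset.Ico a (a + k)) ha
  refine ⟨⟨?_, ?_, ?_⟩, Finset.subset_union_right, ?_, ?_⟩
  · rw [Finset.sup_union, hR.1, sup_image_Ico, Finset.sup_eq_union,
      Finset.sdiff_union_of_subset hU]
  · intro B hB C hC hne
    rcases Finset.mem_union.1 hB with hB' | hB' <;> rcases Finset.mem_union.1 hC with hC' | hC'
    · exact hR.2.1 B hB' C hC' hne
    · rcases Finset.mem_image.1 hC' with ⟨b, hb, rfl⟩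
      exact Finset.sdiff_disjoint.mono (Finset.le_iff_subset.2 (hR.block_subset hB'))
        (Finset.le_iff_subset.2 (hIcoU b hb))
    · rcases Finset.mem_image.1 hB' with ⟨a, ha, rfl⟩
      exact (Finset.sdiff_disjoint.mono (Finset.le_iff_subset.2 (hR.block_subset hC'))
        (Finset.le_iff_subset.2 (hIcoU a ha))).symm
    · rcases Finset.mem_image.1 hB' with ⟨a, ha, rfl⟩
      rcases Finset.mem_image.1 hC' with ⟨b, hb, rfl⟩
      have hab : a ≠ b := fun h => hne (by rw [h])
      rcases Nat.lt_or_ge a b with h | h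
      · exact Ico_k_disj (hgap a ha b hb h)
      · have hba : b < a := by omega
        exact (Ico_k_disj (hgap b hb a ha hba)).symm
  · intro B hB
    rcases Finset.mem_union.1 hB with hB' | hB'
    · exact hR.2.2 B hB'
    · rcases Finset.mem_image.1 hB' with ⟨a, _, rfl⟩
      rw [Nat.card_Ico]
      omega
  · intro B hB
    rcases Finset.mem_image.1 hB with ⟨a, _, rfl⟩
    exact ⟨a, rfl⟩
  · rw [Finset.card_image_of_injective _ (Ico_k_inj hk), hScard]

noncomputable def pairsEquiv (k m j : ℕ) (hk : 0 < k) :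
    {q : Finset (Finset ℕ) × Finset (Finset ℕ) //
        KPart k (Finset.range m) q.1 ∧ q.2 ⊆ q.1 ∧
        (∀ B ∈ q.2, ∃ i, B = Finset.Ico i (i + k)) ∧ q.2.card = j}
      ≃ Σ S : {S : Finset ℕ // S.card = j ∧ (∀ a ∈ S, a + k ≤ m) ∧
            ∀ a ∈ S, ∀ b ∈ S, a < b → a + k ≤ b},
          {R // KPart k (Finset.range m \ S.1.sup (fun a => Finset.Ico a (a + k))) R} := by
  apply Equiv.symm
  refine Equiv.ofBijective (f := fun p =>
    ⟨(p.2.1 ∪ p.1.1.image (fun a => Finset.Ico a (a + k)),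
      p.1.1.image (fun a => Finset.Ico a (a + k))),
     (glue_prop hk p.1.2.1 p.1.2.2.1 p.1.2.2.2 p.2.2).1,
     (glue_prop hk p.1.2.1 p.1.2.2.1 p.1.2.2.2 p.2.2).2.1,
     (glue_prop hk p.1.2.1 p.1.2.2.1 p.1.2.2.2 p.2.2).2.2.1,
     (glue_prop hk p.1.2.1 p.1.2.2.1 p.1.2.2.2 p.2.2).2.2.2⟩) ⟨?_, ?_⟩
  · -- injective
    rintro ⟨⟨S, hS⟩, ⟨R, hR⟩⟩ ⟨⟨S', hS'⟩, ⟨R', hR'⟩⟩ heq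
    simp only [Subtype.mk_eq_mk, Prod.mk.injEq] at heq
    obtain ⟨hunion, himg⟩ := heq
    have hSS' : S = S' := Finset.image_injective (Ico_k_inj hk) himg
    subst hSS'
    have hdisjR : ∀ (T : Finset (Finset ℕ)),
        KPart k (Finset.range m \ S.sup (fun a => Finset.Ico a (a + k))) T →
        ∀ B ∈ T, B ∉ S.image (fun a => Finset.Ico a (a + k)) := by
      intro T hT B hB hBimg
      rcases Finset.mem_image.1 hBimg with ⟨a, ha, rfl⟩
      have h1 : a ∈ Finset.Ico a (a + k) := by simp; omega
      have h2 := hT.block_subset hB h1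
      rw [Finset.mem_sdiff] at h2
      exact h2.2 (Finset.le_sup (f := fun a => Finset.Ico a (a + k)) ha h1)
    have hRR' : R = R' := by
      have d1 : Disjoint R (S.image (fun a => Finset.Ico a (a + k))) :=
        Finset.disjoint_left.2 (fun B hB => hdisjR R hR B hB)
      have d2 : Disjoint R' (S.image (fun a => Finset.Ico a (a + k))) :=
        Finset.disjoint_left.2 (fun B hB => hdisjR R' hR' B hB)
      rw [← Finset.union_sdiff_cancel_right d1, ← Finset.union_sdiff_cancel_right d2, hunion]
    subst hRR'
    rfl
  · -- surjective
    rintro ⟨⟨P, J⟩, hKP, hJP, hshort, hJcard⟩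
    classical
    set startOf : Finset ℕ → ℕ := fun B => if h : B.Nonempty then B.min' h else 0 with hso
    have hstart : ∀ a : ℕ, startOf (Finset.Ico a (a + k)) = a := by
      intro a
      have hne : (Finset.Ico a (a + k)).Nonempty := by
        rw [Finset.nonempty_Ico]; omega
      rw [hso]
      simp only [dif_pos hne]
      apply le_antisymm
      · exact Finset.min'_le _ _ (by simp; omega)
      · exact Finset.le_min' _ _ _ (fun y hy => (Finset.mem_Ico.1 hy).1)
    set S := J.image startOf with hSdef
    have hJB : ∀ B ∈ J, B = Finset.Ico (startOf B) (startOf B + k) := by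
      intro B hB
      rcases hshort B hB with ⟨i, rfl⟩
      rw [hstart]
    have hJS : S.image (fun a => Finset.Ico a (a + k)) = J := by
      rw [hSdef, Finset.image_image]
      calc J.image ((fun a => Finset.Ico a (a + k)) ∘ startOf)
          = J.image id := Finset.image_congr (fun B hB => (hJB B hB).symm)
        _ = J := Finset.image_id
    have hScard : S.card = j := by
      rw [hSdef, Finset.card_image_of_injOn, hJcard]
      intro B hB C hC hBC
      rw [hJB B hB, hJB C hC, hBC]
    have hSbd : ∀ a ∈ S, a + k ≤ m := by
      intro a ha
      rcases Finset.mem_image.1 ha with ⟨B, hB, rfl⟩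
      obtain ⟨i, rfl⟩ := hshort B hB
      rw [hstart]
      have h1 : i + k - 1 ∈ Finset.Ico i (i + k) := by simp; omega
      have h2 := hKP.block_subset (hJP hB) h1
      rw [Finset.mem_range] at h2
      omega
    have hSgap : ∀ a ∈ S, ∀ b ∈ S, a < b → a + k ≤ b := by
      intro a ha b hb hab
      have haJ : Finset.Ico a (a + k) ∈ J := by
        rw [← hJS]; exact Finset.mem_image_of_mem _ ha
      have hbJ : Finset.Ico b (b + k) ∈ J := by
        rw [← hJS]; exact Finset.mem_image_of_mem _ hb
      have hne : Finset.Ico a (a + k) ≠ Finset.Ico b (b + k) :=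
        fun h => absurd (Ico_k_inj hk h) (by omega)
      have hdisj := hKP.2.1 _ (hJP haJ) _ (hJP hbJ) hne
      by_contra hcon
      have hbmem : b ∈ Finset.Ico a (a + k) := by simp; omega
      have hbmem' : b ∈ Finset.Ico b (b + k) := by simp; omega
      exact absurd hbmem' (Finset.disjoint_left.1 hdisj hbmem)
    have hRK : KPart k (Finset.range m \ S.sup (fun a => Finset.Ico a (a + k))) (P \ J) := by
      refine ⟨?_, ?_, ?_⟩
      · rw [hKP.sup_sdiff hJP, ← hJS, sup_image_Ico]
      · intro B hB C hC hne
        exact hKP.2.1 B (Finset.mem_sdiff.1 hB).1 C (Finset.mem_sdiff.1 hC).1 hne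
      · intro B hB
        exact hKP.2.2 B (Finset.mem_sdiff.1 hB).1
    refine ⟨⟨⟨S, hScard, hSbd, hSgap⟩, ⟨P \ J, hRK⟩⟩, ?_⟩
    apply Subtype.ext
    simp only
    rw [hJS, Finset.sdiff_union_of_subset hJP]

lemma alt_sum_powerset {β : Type*} [DecidableEq β] (s : Finset β) (n : ℕ) (hn : s.card ≤ n) :
    ∑ J ∈ s.powerset, (-1 : ℤ) ^ J.card
      = ∑ j ∈ Finset.range (n + 1), (-1 : ℤ) ^ j * ((s.powersetCard j).card : ℤ) := by
  rw [Finset.sum_powerset_apply_card (fun c => ((-1 : ℤ)) ^ c)]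
  rw [← Finset.sum_subset (Finset.range_subset_range.2 (by omega : s.card + 1 ≤ n + 1))
    (by
      intro j hj hj'
      simp only [Finset.mem_range] at hj hj'
      rw [Finset.card_powersetCard, Nat.choose_eq_zero_of_lt (by omega)]
      simp)]
  refine Finset.sum_congr rfl (fun j _ => ?_)
  rw [Finset.card_powersetCard]
  push_cast
  rw [nsmul_eq_mul]
  push_cast
  ring


/-- The number of linear `k`-chord diagrams of length `k*n` with no short chord equals
`Σ_{j=0}^n (-1)^j ((k(n-j))!/((k!)^{n-j}(n-j)!)) C(kn - j(k-1), j)`.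
The inner natural-number division is exact. -/
theorem stmt3 (k n : ℕ) (hk : 1 ≤ k) :
    (Nat.card {P : Finpartition (Finset.range (k * n)) //
        (∀ B ∈ P.parts, B.card = k) ∧
        ∀ B ∈ P.parts, ¬ ∃ i, B = Finset.Ico i (i + k)} : ℤ)
    = ∑ j ∈ Finset.range (n + 1), (-1) ^ j *
        ((Nat.factorial (k * (n - j)) / (Nat.factorial k ^ (n - j) * Nat.factorial (n - j))
          * Nat.choose (k * n - j * (k - 1)) j : ℕ) : ℤ) := by
  classical
  have hk' : 0 < k := hk
  set shortR : Finset (Finset ℕ) → Finset (Finset ℕ) :=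
    fun R => R.filter (fun B => ∃ i, B = Finset.Ico i (i + k)) with hshortR
  set Ωp : Finset (Finset (Finset ℕ)) :=
    (((Finset.range (k * n)).powerset).powerset).filter
      (fun R => KPart k (Finset.range (k * n)) R) with hΩp
  have hmemΩp : ∀ R, R ∈ Ωp ↔ KPart k (Finset.range (k * n)) R := by
    intro R
    rw [hΩp, Finset.mem_filter, Finset.mem_powerset]
    exact ⟨fun h => h.2, fun h => ⟨h.subset_powerset, h⟩⟩
  -- Step 1 : identify the LHS with a concrete finset cardinality
  have step1 : Nat.card {P : Finpartition (Finset.range (k * n)) //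
        (∀ B ∈ P.parts, B.card = k) ∧
        ∀ B ∈ P.parts, ¬ ∃ i, B = Finset.Ico i (i + k)}
      = (Ωp.filter (fun R => shortR R = ∅)).card := by
    have e1 : {P : Finpartition (Finset.range (k * n)) // (∀ B ∈ P.parts, B.card = k) ∧
          ∀ B ∈ P.parts, ¬ ∃ i, B = Finset.Ico i (i + k)}
        ≃ {R // KPart k (Finset.range (k * n)) R ∧
            ∀ B ∈ R, ¬ ∃ i, B = Finset.Ico i (i + k)} :=
      ((Equiv.subtypeSubtypeEquivSubtypeInter _ _).symm.trans
        ((Equiv.subtypeEquiv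
          (p := fun x : {P : Finpartition (Finset.range (k * n)) //
            ∀ B ∈ P.parts, B.card = k} => ∀ B ∈ x.1.parts, ¬ ∃ i, B = Finset.Ico i (i + k))
          (q := fun y : {R // KPart k (Finset.range (k * n)) R} =>
            ∀ B ∈ y.1, ¬ ∃ i, B = Finset.Ico i (i + k))
          (kpartEquiv k hk' (Finset.range (k * n))).symm
          (fun x => Iff.rfl)).trans
        (Equiv.subtypeSubtypeEquivSubtypeInter
          (fun R => KPart k (Finset.range (k * n)) R)
          (fun R => ∀ B ∈ R, ¬ ∃ i, B = Finset.Ico i (i + k)))))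
    have e2 : {R // KPart k (Finset.range (k * n)) R ∧
          ∀ B ∈ R, ¬ ∃ i, B = Finset.Ico i (i + k)}
        ≃ {R // R ∈ Ωp.filter (fun R => shortR R = ∅)} :=
      Equiv.subtypeEquivRight (by
        intro R
        rw [Finset.mem_filter, hmemΩp]
        constructor
        · rintro ⟨h1, h2⟩
          exact ⟨h1, Finset.filter_eq_empty_iff.2 h2⟩
        · rintro ⟨h1, h2⟩
          exact ⟨h1, Finset.filter_eq_empty_iff.1 h2⟩)
    rw [Nat.card_congr (e1.trans e2), Nat.card_eq_finsetCard]
  -- every R in Ωp has exactly n blocks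
  have hcardR : ∀ R ∈ Ωp, R.card = n := by
    intro R hR
    rw [hmemΩp] at hR
    have hdisj : ∀ B ∈ R, ∀ C ∈ R, B ≠ C → Disjoint (id B) (id C) := hR.2.1
    have h1 : (R.biUnion id).card = ∑ B ∈ R, (id B).card := Finset.card_biUnion hdisj
    rw [← Finset.sup_eq_biUnion, hR.1, Finset.card_range] at h1
    have h2 : ∑ B ∈ R, (id B).card = ∑ B ∈ R, k :=
      Finset.sum_congr rfl (fun B hB => hR.2.2 B hB)
    rw [h2, Finset.sum_const, smul_eq_mul] at h1
    have h3 : R.card * k = n * k := by rw [← h1, Nat.mul_comm]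
    exact Nat.eq_of_mul_eq_mul_right hk' h3
  have hshortle : ∀ R ∈ Ωp, (shortR R).card ≤ n := by
    intro R hR
    rw [← hcardR R hR]
    exact Finset.card_le_card (Finset.filter_subset _ _)
  -- Step 2 : inclusion–exclusion
  have step2 : (((Ωp.filter (fun R => shortR R = ∅)).card : ℤ))
      = ∑ j ∈ Finset.range (n + 1), (-1 : ℤ) ^ j *
          (((Ωp.sigma (fun R => (shortR R).powersetCard j)).card : ℤ)) := by
    calc ((Ωp.filter (fun R => shortR R = ∅)).card : ℤ)
        = ∑ R ∈ Ωp, (if shortR R = ∅ then (1 : ℤ) else 0) := by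
          rw [Finset.card_filter]
          push_cast
          exact Finset.sum_congr rfl (fun R _ => by split <;> simp)
      _ = ∑ R ∈ Ωp, ∑ J ∈ (shortR R).powerset, (-1 : ℤ) ^ J.card :=
          Finset.sum_congr rfl (fun R _ => (Finset.sum_powerset_neg_one_pow_card).symm)
      _ = ∑ R ∈ Ωp, ∑ j ∈ Finset.range (n + 1),
            (-1 : ℤ) ^ j * (((shortR R).powersetCard j).card : ℤ) :=
          Finset.sum_congr rfl (fun R hR => alt_sum_powerset _ _ (hshortle R hR))
      _ = ∑ j ∈ Finset.range (n + 1), ∑ R ∈ Ωp,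
            (-1 : ℤ) ^ j * (((shortR R).powersetCard j).card : ℤ) := Finset.sum_comm
      _ = ∑ j ∈ Finset.range (n + 1), (-1 : ℤ) ^ j *
            (((Ωp.sigma (fun R => (shortR R).powersetCard j)).card : ℤ)) := by
          refine Finset.sum_congr rfl (fun j _ => ?_)
          rw [← Finset.mul_sum, Finset.card_sigma]
          push_cast
          ring
  -- Step 3 : count the pairs
  have step3 : ∀ j, j ≤ n → (Ωp.sigma (fun R => (shortR R).powersetCard j)).card
      = Nat.factorial (k * (n - j)) / (Nat.factorial k ^ (n - j) * Nat.factorial (n - j))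
        * Nat.choose (k * n - j * (k - 1)) j := by
    intro j hj
    rw [← Nat.card_eq_finsetCard]
    have e2 : {x : (Σ _ : Finset (Finset ℕ), Finset (Finset ℕ)) //
          x ∈ Ωp.sigma (fun R => (shortR R).powersetCard j)}
        ≃ {q : Finset (Finset ℕ) × Finset (Finset ℕ) //
            KPart k (Finset.range (k * n)) q.1 ∧ q.2 ⊆ q.1 ∧
            (∀ B ∈ q.2, ∃ i, B = Finset.Ico i (i + k)) ∧ q.2.card = j} :=
      Equiv.subtypeEquiv (Equiv.sigmaEquivProd _ _) (by
        intro x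
        rw [Finset.mem_sigma, hmemΩp, Finset.mem_powersetCard]
        constructor
        · rintro ⟨h1, h2, h3⟩
          refine ⟨h1, h2.trans (Finset.filter_subset _ _), ?_, h3⟩
          intro B hB
          exact (Finset.mem_filter.1 (h2 hB)).2
        · rintro ⟨h1, h2, h3, h4⟩
          exact ⟨h1, fun B hB => Finset.mem_filter.2 ⟨h2 hB, h3 B hB⟩, h4⟩)
    rw [Nat.card_congr (e2.trans (pairsEquiv k (k * n) j hk'))]
    haveI hSfin : Finite {S : Finset ℕ // S.card = j ∧ (∀ a ∈ S, a + k ≤ k * n) ∧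
        ∀ a ∈ S, ∀ b ∈ S, a < b → a + k ≤ b} :=
      finite_of_subset_powerset (Finset.range (k * n))
        (fun S hS a ha => Finset.mem_range.2 (by have := hS.2.1 a ha; omega))
    letI := Fintype.ofFinite {S : Finset ℕ // S.card = j ∧ (∀ a ∈ S, a + k ≤ k * n) ∧
        ∀ a ∈ S, ∀ b ∈ S, a < b → a + k ≤ b}
    haveI : ∀ S : {S : Finset ℕ // S.card = j ∧ (∀ a ∈ S, a + k ≤ k * n) ∧
        ∀ a ∈ S, ∀ b ∈ S, a < b → a + k ≤ b},
        Finite {R // KPart k (Finset.range (k * n)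
          \ S.1.sup (fun a => Finset.Ico a (a + k))) R} := fun S => finite_KPart
    rw [nat_card_sigma]
    have hfiber : ∀ S : {S : Finset ℕ // S.card = j ∧ (∀ a ∈ S, a + k ≤ k * n) ∧
        ∀ a ∈ S, ∀ b ∈ S, a < b → a + k ≤ b},
        Nat.card {R // KPart k (Finset.range (k * n)
            \ S.1.sup (fun a => Finset.Ico a (a + k))) R}
          = Nat.factorial (k * (n - j))
            / (Nat.factorial k ^ (n - j) * Nat.factorial (n - j)) := by
      intro S
      obtain ⟨S, hScard, hSbd, hSgap⟩ := S
      have hUsub : S.sup (fun a => Finset.Ico a (a + k)) ⊆ Finset.range (k * n) :=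
        U_subset_range hSbd
      have hcardU : (S.sup (fun a => Finset.Ico a (a + k))).card = j * k := by
        rw [Finset.sup_eq_biUnion, Finset.card_biUnion]
        · rw [Finset.sum_congr rfl (fun a (_ : a ∈ S) => (by rw [Nat.card_Ico]; omega :
            (Finset.Ico a (a + k)).card = k)), Finset.sum_const, smul_eq_mul, hScard]
        · intro a ha b hb hne
          rcases Nat.lt_or_ge a b with h | h
          · exact Ico_k_disj (hSgap a ha b hb h)
          · exact (Ico_k_disj (hSgap b hb a ha (by omega))).symm
      have hcards : (Finset.range (k * n) \ S.sup (fun a => Finset.Ico a (a + k))).card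
          = k * (n - j) := by
        rw [Finset.card_sdiff_of_subset hUsub, Finset.card_range, hcardU]
        have h1 : k * n = k * j + k * (n - j) := by
          rw [← Nat.mul_add]
          congr 1
          omega
        have h2 : j * k = k * j := Nat.mul_comm j k
        omega
      have hcnt := kpart_count k hk' (n - j) _ hcards
      have hpos : 0 < Nat.factorial k ^ (n - j) * Nat.factorial (n - j) := by positivity
      exact (Nat.div_eq_of_eq_mul_left hpos hcnt.symm).symm
    rw [Finset.sum_congr rfl (fun S _ => hfiber S), Finset.sum_const, Finset.card_univ,
      smul_eq_mul, ← Nat.card_eq_fintype_card, starts_count k (k * n) j hk', Nat.mul_comm]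
  -- put everything together
  rw [step1, step2]
  refine Finset.sum_congr rfl (fun j hj => ?_)
  rw [step3 j (by simpa [Nat.lt_succ_iff] using Finset.mem_range.1 hj)]
end

section
/- The number of linear k-chord diagrams of length kn with exactly ℓ short chords equals the coefficient of z^ℓ in Σ_{j=0}^{n} ((k(n-j))!/((k!)^{n-j}(n-j)!)) · C(kn - j(k-1), j) · (z-1)^j. -/
open scoped Classical

open Finset Polynomial


/-- number of partitions of a `k*m`-set into blocks of size `k` -/
def T (k : ℕ) : ℕ → ℕ
  | 0 => 1
  | m+1 => Nat.choose (k*(m+1)-1) (k-1) * T k m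

/-- parts-ok predicate: `P` is a partition of `s` into blocks of size `k`. -/
def pok (k : ℕ) (s : Finset ℕ) (P : Finset (Finset ℕ)) : Prop :=
  (∀ B ∈ P, B.card = k) ∧ (P : Set (Finset ℕ)).PairwiseDisjoint id ∧ P.sup id = s

noncomputable def diag (k : ℕ) (s : Finset ℕ) : Finset (Finset (Finset ℕ)) :=
  s.powerset.powerset.filter (pok k s)

lemma pok_subset {k : ℕ} {s : Finset ℕ} {P : Finset (Finset ℕ)} (h : pok k s P)
    {B : Finset ℕ} (hB : B ∈ P) : B ⊆ s :=
  h.2.2 ▸ (Finset.le_sup (f := id) hB : _ ≤ P.sup id)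

lemma mem_diagk {k : ℕ} {s : Finset ℕ} {P : Finset (Finset ℕ)} :
    P ∈ diag k s ↔ pok k s P := by
  unfold _root_.diag
  rw [mem_filter, mem_powerset]
  constructor
  · exact fun h => h.2
  · intro h
    refine ⟨fun B hB => ?_, h⟩
    rw [mem_powerset]
    exact pok_subset h hB

lemma pok_exists_unique {k : ℕ} {s : Finset ℕ} {P : Finset (Finset ℕ)} (h : pok k s P)
    {x : ℕ} (hx : x ∈ s) : ∃! B, B ∈ P ∧ x ∈ B := by
  have : x ∈ P.sup id := h.2.2 ▸ hx
  rw [Finset.sup_eq_biUnion, Finset.mem_biUnion] at this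
  obtain ⟨B, hB, hxB⟩ := this
  refine ⟨B, ⟨hB, hxB⟩, ?_⟩
  rintro C ⟨hC, hxC⟩
  by_contra hne
  exact absurd hxB (Finset.disjoint_left.1 (h.2.1 hC hB hne) hxC)

lemma pok_mem_sup_iff {k : ℕ} {s : Finset ℕ} {P : Finset (Finset ℕ)} (h : pok k s P)
    {x : ℕ} : x ∈ s ↔ ∃ B ∈ P, x ∈ B := by
  rw [← h.2.2, Finset.sup_eq_biUnion, Finset.mem_biUnion]
  simp

/-- the block of `P` containing `a` -/
noncomputable def blockOf (a : ℕ) (P : Finset (Finset ℕ)) : Finset ℕ :=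
  (P.filter (fun B => a ∈ B)).sup id

lemma blockOf_spec {k : ℕ} {s : Finset ℕ} {P : Finset (Finset ℕ)} (h : pok k s P)
    {a : ℕ} (ha : a ∈ s) : blockOf a P ∈ P ∧ a ∈ blockOf a P := by
  obtain ⟨B, ⟨hB, haB⟩, huniq⟩ := pok_exists_unique h ha
  have : P.filter (fun B => a ∈ B) = {B} := by
    apply Finset.eq_singleton_iff_unique_mem.2
    refine ⟨Finset.mem_filter.2 ⟨hB, haB⟩, fun C hC => ?_⟩
    exact huniq C (Finset.mem_filter.1 hC)
  rw [blockOf, this]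
  simpa using ⟨hB, haB⟩

lemma blockOf_eq {k : ℕ} {s : Finset ℕ} {P : Finset (Finset ℕ)} (h : pok k s P)
    {a : ℕ} {B : Finset ℕ} (hB : B ∈ P) (haB : a ∈ B) : blockOf a P = B := by
  have ha : a ∈ s := (pok_mem_sup_iff h).2 ⟨B, hB, haB⟩
  obtain ⟨C, _, huniq⟩ := pok_exists_unique h ha
  have h1 := huniq _ (blockOf_spec h ha)
  have h2 := huniq B ⟨hB, haB⟩
  rw [h1, h2]

lemma mem_sup_id_iff {P : Finset (Finset ℕ)} {x : ℕ} :
    x ∈ P.sup id ↔ ∃ B ∈ P, x ∈ B := by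
  rw [Finset.sup_eq_biUnion, Finset.mem_biUnion]
  simp

lemma pok_card {k : ℕ} {s : Finset ℕ} {P : Finset (Finset ℕ)} (h : pok k s P) :
    s.card = P.card * k := by
  have h1 : s = P.biUnion id := by rw [← h.2.2, Finset.sup_eq_biUnion]
  rw [h1, Finset.card_biUnion (fun x hx y hy hxy => h.2.1 hx hy hxy)]
  simp only [id]
  rw [Finset.sum_congr rfl (fun B hB => h.1 B hB), Finset.sum_const, smul_eq_mul]

lemma diag_empty {k : ℕ} (hk : 1 ≤ k) : diag k ∅ = {∅} := by
  ext P
  rw [mem_diagk, Finset.mem_singleton]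
  constructor
  · intro h
    by_contra hne
    obtain ⟨B, hB⟩ := Finset.nonempty_iff_ne_empty.2 hne
    have hBe : B = ∅ := Finset.subset_empty.1 (pok_subset h hB)
    have := h.1 B hB
    rw [hBe] at this
    simp at this
    omega
  · rintro rfl
    exact ⟨by simp, by simp [Set.PairwiseDisjoint], by simp⟩

lemma card_blocks_through {k : ℕ} {s : Finset ℕ} {a : ℕ} (ha : a ∈ s) (hk : 1 ≤ k) :
    ((s.powersetCard k).filter (fun B => a ∈ B)).card = Nat.choose (s.card - 1) (k - 1) := by
  rw [← Finset.card_erase_of_mem ha, ← Finset.card_powersetCard]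
  refine Finset.card_bij' (fun B _ => B.erase a) (fun C _ => insert a C) ?hi ?hj ?li ?ri
  case hi =>
    intro B hB
    rw [Finset.mem_filter, Finset.mem_powersetCard] at hB
    rw [Finset.mem_powersetCard]
    refine ⟨fun x hx => Finset.mem_erase.2 ⟨(Finset.mem_erase.1 hx).1,
        hB.1.1 (Finset.mem_erase.1 hx).2⟩, ?_⟩
    rw [Finset.card_erase_of_mem hB.2, hB.1.2]
  case hj =>
    intro C hC
    rw [Finset.mem_powersetCard] at hC
    rw [Finset.mem_filter, Finset.mem_powersetCard]
    have haC : a ∉ C := fun hx => (Finset.mem_erase.1 (hC.1 hx)).1 rfl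
    refine ⟨⟨?_, ?_⟩, Finset.mem_insert_self a C⟩
    · intro x hx
      rcases Finset.mem_insert.1 hx with rfl | hx
      · exact ha
      · exact Finset.mem_of_mem_erase (hC.1 hx)
    · rw [Finset.card_insert_of_notMem haC, hC.2]
      omega
  case li =>
    intro B hB
    rw [Finset.mem_filter, Finset.mem_powersetCard] at hB
    exact Finset.insert_erase hB.2
  case ri =>
    intro C hC
    rw [Finset.mem_powersetCard] at hC
    exact Finset.erase_insert (fun hx => (Finset.mem_erase.1 (hC.1 hx)).1 rfl)

lemma pok_erase {k : ℕ} {s : Finset ℕ} {P : Finset (Finset ℕ)} (h : pok k s P)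
    {B : Finset ℕ} (hB : B ∈ P) : pok k (s \ B) (P.erase B) := by
  refine ⟨fun C hC => h.1 C (Finset.mem_of_mem_erase hC),
    Set.PairwiseDisjoint.subset h.2.1 (by simp [Finset.erase_subset]), ?_⟩
  ext x
  rw [Finset.mem_sdiff, mem_sup_id_iff]
  constructor
  · rintro ⟨C, hC, hxC⟩
    have hC' := Finset.mem_of_mem_erase hC
    refine ⟨(pok_mem_sup_iff h).2 ⟨C, hC', hxC⟩, fun hxB => ?_⟩
    exact (Finset.mem_erase.1 hC).1 (by
      by_contra hne
      exact absurd hxB (Finset.disjoint_left.1 (h.2.1 hC' hB hne) hxC))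
  · rintro ⟨hxs, hxB⟩
    obtain ⟨C, hC, hxC⟩ := (pok_mem_sup_iff h).1 hxs
    exact ⟨C, Finset.mem_erase.2 ⟨fun hCB => hxB (hCB ▸ hxC), hC⟩, hxC⟩

lemma pok_insert {k : ℕ} {s : Finset ℕ} {B : Finset ℕ} {Q : Finset (Finset ℕ)}
    (hBs : B ⊆ s) (hBk : B.card = k) (hQ : pok k (s \ B) Q) : pok k s (insert B Q) := by
  have hdisjB : ∀ C ∈ Q, Disjoint B C := by
    intro C hC
    have hCs := pok_subset hQ hC
    exact Finset.disjoint_left.2 (fun x hxB hxC => (Finset.mem_sdiff.1 (hCs hxC)).2 hxB)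
  refine ⟨?_, ?_, ?_⟩
  · intro C hC
    rcases Finset.mem_insert.1 hC with rfl | hC
    · exact hBk
    · exact hQ.1 C hC
  · intro C hC D hD hne
    simp only [Finset.coe_insert, Set.mem_insert_iff, Finset.mem_coe] at hC hD
    rcases hC with rfl | hC <;> rcases hD with rfl | hD
    · exact absurd rfl hne
    · exact hdisjB D hD
    · exact (hdisjB C hC).symm
    · exact hQ.2.1 hC hD hne
  · rw [Finset.sup_insert, hQ.2.2]
    simp only [id]
    exact Finset.union_sdiff_of_subset hBs

lemma B_not_mem {k : ℕ} {s : Finset ℕ} {B : Finset ℕ} {Q : Finset (Finset ℕ)}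
    (hQ : pok k (s \ B) Q) {a : ℕ} (haB : a ∈ B) : B ∉ Q := by
  intro hB
  exact (Finset.mem_sdiff.1 (pok_subset hQ hB haB)).2 haB

lemma diag_recursion {k : ℕ} {s : Finset ℕ} (hs : s.Nonempty) :
    (diag k s).card = ∑ B ∈ (s.powersetCard k).filter (fun B => s.min' hs ∈ B),
      (diag k (s \ B)).card := by
  set a := s.min' hs with ha_def
  have ha : a ∈ s := s.min'_mem hs
  rw [← Finset.card_sigma]
  refine Finset.card_bij'
    (fun P _ => (⟨blockOf a P, P.erase (blockOf a P)⟩ : Σ _ : Finset ℕ, Finset (Finset ℕ)))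
    (fun Q _ => insert Q.1 Q.2) ?hi ?hj ?li ?ri
  case hi =>
    intro P hP
    rw [mem_diagk] at hP
    obtain ⟨hmem, haB⟩ := blockOf_spec hP ha
    rw [Finset.mem_sigma, Finset.mem_filter, Finset.mem_powersetCard]
    exact ⟨⟨⟨pok_subset hP hmem, hP.1 _ hmem⟩, haB⟩, mem_diagk.2 (pok_erase hP hmem)⟩
  case hj =>
    rintro ⟨B, Q⟩ hQ
    rw [Finset.mem_sigma, Finset.mem_filter, Finset.mem_powersetCard] at hQ
    obtain ⟨⟨⟨hBs, hBk⟩, haB⟩, hQd⟩ := hQ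
    exact mem_diagk.2 (pok_insert hBs hBk (mem_diagk.1 hQd))
  case li =>
    intro P hP
    rw [mem_diagk] at hP
    exact Finset.insert_erase (blockOf_spec hP ha).1
  case ri =>
    rintro ⟨B, Q⟩ hQ
    rw [Finset.mem_sigma, Finset.mem_filter, Finset.mem_powersetCard] at hQ
    obtain ⟨⟨⟨hBs, hBk⟩, haB⟩, hQd⟩ := hQ
    rw [mem_diagk] at hQd
    have hins := pok_insert hBs hBk hQd
    have h1 : blockOf a (insert B Q) = B := blockOf_eq hins (Finset.mem_insert_self B Q) haB
    simp only [h1]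
    rw [Finset.erase_insert (B_not_mem hQd haB)]

lemma card_diag {k : ℕ} (hk : 1 ≤ k) :
    ∀ (m : ℕ) (s : Finset ℕ), s.card = k * m → (diag k s).card = T k m := by
  intro m
  induction m with
  | zero =>
    intro s hs
    rw [Nat.mul_zero, Finset.card_eq_zero] at hs
    rw [hs, diag_empty hk, T]
    simp
  | succ m ih =>
    intro s hs
    have hs0 : s.Nonempty := by
      rw [← Finset.card_pos, hs]
      positivity
    have hstep : ∀ B ∈ (s.powersetCard k).filter (fun B => s.min' hs0 ∈ B),
        (diag k (s \ B)).card = T k m := by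
      intro B hB
      rw [Finset.mem_filter, Finset.mem_powersetCard] at hB
      apply ih
      rw [Finset.card_sdiff_of_subset hB.1.1, hs, hB.1.2]
      have : k * (m + 1) = k * m + k := by ring
      omega
    rw [diag_recursion hs0, Finset.sum_congr rfl hstep, Finset.sum_const, smul_eq_mul,
      card_blocks_through (s.min'_mem hs0) hk, hs, T]

lemma T_factorial {k : ℕ} (hk : 1 ≤ k) :
    ∀ m, T k m * (Nat.factorial k ^ m * Nat.factorial m) = Nat.factorial (k * m)
  | 0 => by simp [T]
  | (m+1) => by
    have ih := T_factorial hk m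
    have h3 : k * m + k - 1 - (k-1) = k * m := by omega
    have h1 := Nat.choose_mul_factorial_mul_factorial (show k-1 ≤ k*m+k-1 by omega)
    rw [h3] at h1
    have hfk : Nat.factorial k = k * Nat.factorial (k-1) := by
      conv_lhs => rw [show k = (k-1)+1 by omega]
      rw [Nat.factorial_succ]
      congr 1
      omega
    have hfak : Nat.factorial (k*m+k) = (k*m+k) * Nat.factorial (k*m+k-1) := by
      conv_lhs => rw [show k*m+k = (k*m+k-1)+1 by omega]
      rw [Nat.factorial_succ]
      congr 1
      omega
    have hmk : k * (m+1) = k*m+k := by ring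
    rw [T, hmk, hfak, ← h1, pow_succ, Nat.factorial_succ, ← ih, hfk]
    ring

/-- rank of `x` in `S` -/
def rk (S : Finset ℕ) (x : ℕ) : ℕ := (S.filter (fun z => z < x)).card

lemma mul_pred_add {k : ℕ} (hk : 1 ≤ k) (r : ℕ) : r * (k-1) + r = r * k := by
  conv_rhs => rw [show k = (k-1)+1 by omega]
  ring

lemma rk_mono (S : Finset ℕ) {x y : ℕ} (h : x ≤ y) : rk S x ≤ rk S y := by
  apply Finset.card_le_card
  intro z hz
  rw [Finset.mem_filter] at hz ⊢
  exact ⟨hz.1, by omega⟩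

lemma rk_lt {S : Finset ℕ} {x y : ℕ} (hx : x ∈ S) (h : x < y) : rk S x < rk S y := by
  have hsub : insert x (S.filter (fun z => z < x)) ⊆ S.filter (fun z => z < y) := by
    intro z hz
    rcases Finset.mem_insert.1 hz with rfl | hz
    · exact Finset.mem_filter.2 ⟨hx, h⟩
    · rw [Finset.mem_filter] at hz ⊢
      exact ⟨hz.1, by omega⟩
  have := Finset.card_le_card hsub
  rwa [Finset.card_insert_of_notMem (by simp)] at this

lemma rk_le_card {S : Finset ℕ} {x : ℕ} (hx : x ∈ S) : rk S x + 1 ≤ S.card := by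
  have hsub : insert x (S.filter (fun z => z < x)) ⊆ S := by
    intro z hz
    rcases Finset.mem_insert.1 hz with rfl | hz
    · exact hx
    · exact (Finset.mem_filter.1 hz).1
  have := Finset.card_le_card hsub
  rwa [Finset.card_insert_of_notMem (by simp)] at this

/-- chain lemma: in a `k`-separated set, ranks control distances -/
lemma rk_chain {k : ℕ} {S : Finset ℕ}
    (hgap : ∀ x ∈ S, ∀ y ∈ S, x < y → x + k ≤ y) :
    ∀ y ∈ S, ∀ x ∈ S, x < y → x + rk S y * k ≤ y + rk S x * k := by
  intro y
  induction y using Nat.strong_induction_on with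
  | _ y ih =>
    intro hy x hx hxy
    have hF : x ∈ S.filter (fun z => z < y) := Finset.mem_filter.2 ⟨hx, hxy⟩
    have hFne : (S.filter (fun z => z < y)).Nonempty := ⟨x, hF⟩
    set m := (S.filter (fun z => z < y)).max' hFne with hm_def
    have hmF := (S.filter (fun z => z < y)).max'_mem hFne
    have hmS : m ∈ S := (Finset.mem_filter.1 hmF).1
    have hmy : m < y := (Finset.mem_filter.1 hmF).2
    have hxm : x ≤ m := Finset.le_max' (S.filter (fun z => z < y)) x hF
    have hrkm : rk S y = rk S m + 1 := by
      have hset : S.filter (fun z => z < y) = insert m (S.filter (fun z => z < m)) := by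
        ext z
        simp only [Finset.mem_filter, Finset.mem_insert]
        constructor
        · rintro ⟨hzS, hzy⟩
          rcases eq_or_lt_of_le (Finset.le_max' (S.filter (fun z => z < y)) z (Finset.mem_filter.2 ⟨hzS, hzy⟩)) with h | h
          · exact Or.inl h
          · exact Or.inr ⟨hzS, h⟩
        · rintro (rfl | ⟨hzS, hzm⟩)
          · exact ⟨hmS, hmy⟩
          · exact ⟨hzS, by omega⟩
      rw [rk, rk, hset, Finset.card_insert_of_notMem (by simp)]
    rcases eq_or_lt_of_le hxm with h | hxm'
    · rw [hrkm]
      have hg := hgap x hx y hy hxy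
      have h2 : rk S x * k = rk S m * k := by rw [h]
      have h3 : (rk S m + 1) * k = rk S m * k + k := by ring
      omega
    · have h1 := ih m hmy hmS x hx hxm'
      have h2 := hgap m hmS y hy hmy
      rw [hrkm]
      have : (rk S m + 1) * k = rk S m * k + k := by ring
      omega

lemma rk_lower {k : ℕ} {S : Finset ℕ}
    (hgap : ∀ x ∈ S, ∀ y ∈ S, x < y → x + k ≤ y) {y : ℕ} (hy : y ∈ S) :
    rk S y * k ≤ y := by
  rcases Finset.eq_empty_or_nonempty (S.filter (fun z => z < y)) with he | hne
  · have h0 : rk S y = 0 := by rw [rk, he]; simp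
    rw [h0]
    simp
  · obtain ⟨x, hx⟩ := hne
    have hxS := (Finset.mem_filter.1 hx).1
    have hxy := (Finset.mem_filter.1 hx).2
    have hmin : S.min' ⟨x, hxS⟩ ∈ S := S.min'_mem _
    have hminle : S.min' ⟨x, hxS⟩ ≤ x := S.min'_le x hxS
    have hminy : S.min' ⟨x, hxS⟩ < y := by omega
    have h1 := rk_chain hgap y hy _ hmin hminy
    have h0 : rk S (S.min' ⟨x, hxS⟩) = 0 := by
      rw [rk, Finset.card_eq_zero]
      rw [Finset.filter_eq_empty_iff]
      intro z hz
      have := S.min'_le z hz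
      omega
    rw [h0] at h1
    omega

lemma rk_upper {k n : ℕ} {S : Finset ℕ}
    (hgap : ∀ x ∈ S, ∀ y ∈ S, x < y → x + k ≤ y)
    (hbd : ∀ x ∈ S, x + k ≤ k * n) {y : ℕ} (hy : y ∈ S) :
    y + S.card * k ≤ k * n + rk S y * k := by
  have hSne : S.Nonempty := ⟨y, hy⟩
  set t := S.max' hSne with ht_def
  have htS : t ∈ S := S.max'_mem hSne
  have hrt : rk S t + 1 = S.card := by
    have hset : S = insert t (S.filter (fun z => z < t)) := by
      ext z
      simp only [Finset.mem_filter, Finset.mem_insert]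
      constructor
      · intro hz
        rcases eq_or_lt_of_le (S.le_max' z hz) with h | h
        · exact Or.inl h
        · exact Or.inr ⟨hz, h⟩
      · rintro (rfl | ⟨hz, _⟩) <;> [exact htS; exact hz]
    conv_rhs => rw [hset]
    rw [Finset.card_insert_of_notMem (by simp), rk]
  have htbd := hbd t htS
  have hSk : S.card * k = rk S t * k + k := by rw [← hrt]; ring
  rcases eq_or_lt_of_le (S.le_max' y hy) with h | hyt
  · have h2 : rk S y * k = rk S t * k := by rw [h]
    have h3 : y = t := h
    omega
  · have h1 := rk_chain hgap t htS y hy hyt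
    omega

lemma rk_image {S : Finset ℕ} {f : ℕ → ℕ}
    (hf : ∀ x ∈ S, ∀ y ∈ S, x < y → f x < f y) {x : ℕ} (hx : x ∈ S) :
    rk (S.image f) (f x) = rk S x := by
  have hiff : ∀ x ∈ S, ∀ y ∈ S, (x < y ↔ f x < f y) := by
    intro a ha b hb
    refine ⟨hf a ha b hb, fun h => ?_⟩
    rcases lt_trichotomy a b with h' | rfl | h'
    · exact h'
    · omega
    · exact absurd (hf b hb a ha h') (by omega)
  have hset : (S.image f).filter (fun z => z < f x) = (S.filter (fun z => z < x)).image f := by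
    ext y
    simp only [Finset.mem_filter, Finset.mem_image]
    constructor
    · rintro ⟨⟨z, hz, rfl⟩, hlt⟩
      exact ⟨z, ⟨hz, (hiff z hz x hx).2 hlt⟩, rfl⟩
    · rintro ⟨z, ⟨hz, hzx⟩, rfl⟩
      exact ⟨⟨z, hz, rfl⟩, (hiff z hz x hx).1 hzx⟩
  rw [rk, rk, hset, Finset.card_image_of_injOn]
  intro a ha b hb hab
  by_contra hne
  have haS := (Finset.mem_filter.1 ha).1
  have hbS := (Finset.mem_filter.1 hb).1
  rcases lt_or_gt_of_ne hne with h | h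
  · exact absurd hab (by have := hf a haS b hbS h; omega)
  · exact absurd hab (by have := hf b hbS a haS h; omega)

/-- set of possible left endpoints of `j` disjoint `k`-intervals in `range (k*n)` -/
noncomputable def startsSet (k n j : ℕ) : Finset (Finset ℕ) :=
  (Finset.range (k*n)).powerset.filter (fun S => S.card = j ∧
    (∀ x ∈ S, x + k ≤ k*n) ∧ ∀ x ∈ S, ∀ y ∈ S, x < y → x + k ≤ y)

lemma mem_startsSet {k n j : ℕ} {S : Finset ℕ} (hk : 1 ≤ k) :
    S ∈ startsSet k n j ↔ S.card = j ∧ (∀ x ∈ S, x + k ≤ k*n) ∧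
      ∀ x ∈ S, ∀ y ∈ S, x < y → x + k ≤ y := by
  rw [startsSet, Finset.mem_filter, Finset.mem_powerset, and_iff_right_iff_imp]
  intro h x hx
  have := h.2.1 x hx
  rw [Finset.mem_range]
  omega

lemma card_startsSet {k n j : ℕ} (hk : 1 ≤ k) :
    (startsSet k n j).card = Nat.choose (k*n - j*(k-1)) j := by
  rw [← Finset.card_range (k*n - j*(k-1)), ← Finset.card_powersetCard]
  refine Finset.card_bij' (fun S _ => S.image (fun x => x - rk S x * (k-1)))
    (fun Tt _ => Tt.image (fun y => y + rk Tt y * (k-1))) ?hi ?hj ?li ?ri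
  case hi =>
    intro S hS
    rw [mem_startsSet hk] at hS
    obtain ⟨hcard, hbd, hgap⟩ := hS
    rw [Finset.mem_powersetCard]
    constructor
    · intro y hy
      rw [Finset.mem_image] at hy
      obtain ⟨x, hx, rfl⟩ := hy
      rw [Finset.mem_range]
      have h2 := rk_lower hgap hx
      have h3 := rk_upper hgap hbd hx
      have h4 := rk_le_card hx
      rw [hcard] at h3 h4
      have e1 := mul_pred_add hk (rk S x)
      have e2 := mul_pred_add hk j
      omega
    · rw [Finset.card_image_of_injOn, hcard]
      intro a ha b hb hab
      simp only at hab
      by_contra hne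
      have key : ∀ x ∈ S, ∀ y ∈ S, x < y →
          x - rk S x * (k-1) < y - rk S y * (k-1) := by
        intro x hx y hy hxy
        have h1 := rk_chain hgap y hy x hx hxy
        have h2 := rk_lower hgap hx
        have h5 := rk_lt hx hxy
        have e1 := mul_pred_add hk (rk S x)
        have e2 := mul_pred_add hk (rk S y)
        omega
      rcases lt_or_gt_of_ne hne with h | h
      · exact absurd hab (by have := key a ha b hb h; omega)
      · exact absurd hab (by have := key b hb a ha h; omega)
  case hj =>
    intro Tt hTt
    rw [Finset.mem_powersetCard] at hTt
    obtain ⟨hsub, hcard⟩ := hTt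
    have hbd' : ∀ y ∈ Tt, y + 1 + j*(k-1) ≤ k*n := by
      intro y hy
      have := Finset.mem_range.1 (hsub hy)
      omega
    have e2 : ∀ r : ℕ, r + 1 ≤ j → r * (k-1) + (k-1) ≤ j * (k-1) := by
      intro r hr
      calc r * (k-1) + (k-1) = (r+1) * (k-1) := by ring
        _ ≤ j * (k-1) := Nat.mul_le_mul_right _ hr
    rw [mem_startsSet hk]
    have hmono : ∀ x ∈ Tt, ∀ y ∈ Tt, x < y →
        x + rk Tt x * (k-1) + k ≤ y + rk Tt y * (k-1) := by
      intro x hx y hy hxy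
      have h5 := rk_lt hx hxy
      have := e2 (rk Tt x) (by have := rk_lt hx hxy; have := rk_le_card hy; omega)
      have h6 : rk Tt x * (k-1) + (k-1) ≤ rk Tt y * (k-1) := by
        calc rk Tt x * (k-1) + (k-1) = (rk Tt x + 1) * (k-1) := by ring
          _ ≤ rk Tt y * (k-1) := Nat.mul_le_mul_right _ h5
      omega
    refine ⟨?_, ?_, ?_⟩
    · rw [Finset.card_image_of_injOn, hcard]
      intro a ha b hb hab
      simp only at hab
      by_contra hne
      rcases lt_or_gt_of_ne hne with h | h
      · exact absurd hab (by have := hmono a ha b hb h; omega)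
      · exact absurd hab (by have := hmono b hb a ha h; omega)
    · intro x hx
      rw [Finset.mem_image] at hx
      obtain ⟨y, hy, rfl⟩ := hx
      have h1 := hbd' y hy
      have h4 := rk_le_card hy
      rw [hcard] at h4
      have h6 := e2 (rk Tt y) h4
      omega
    · intro x hx y hy hxy
      rw [Finset.mem_image] at hx hy
      obtain ⟨a, ha, rfl⟩ := hx
      obtain ⟨b, hb, rfl⟩ := hy
      have hab : a < b := by
        by_contra hab
        rcases eq_or_lt_of_le (not_lt.1 hab) with rfl | h
        · omega
        · have := hmono b hb a ha h; omega
      exact hmono a ha b hb hab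
  case li =>
    intro S hS
    rw [mem_startsSet hk] at hS
    obtain ⟨hcard, hbd, hgap⟩ := hS
    have hmono : ∀ x ∈ S, ∀ y ∈ S, x < y →
        x - rk S x * (k-1) < y - rk S y * (k-1) := by
      intro x hx y hy hxy
      have h1 := rk_chain hgap y hy x hx hxy
      have h2 := rk_lower hgap hx
      have h5 := rk_lt hx hxy
      have e1 := mul_pred_add hk (rk S x)
      have e2 := mul_pred_add hk (rk S y)
      omega
    simp only [Finset.image_image]
    have : ∀ x ∈ S, ((fun y => y + rk (S.image (fun x => x - rk S x * (k-1))) y * (k-1)) ∘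
        (fun x => x - rk S x * (k-1))) x = x := by
      intro x hx
      simp only [Function.comp]
      rw [rk_image hmono hx]
      have h2 := rk_lower hgap hx
      have e1 := mul_pred_add hk (rk S x)
      omega
    rw [Finset.image_congr (fun x hx => this x hx)]
    simp
  case ri =>
    intro Tt hTt
    rw [Finset.mem_powersetCard] at hTt
    obtain ⟨hsub, hcard⟩ := hTt
    have hmono : ∀ x ∈ Tt, ∀ y ∈ Tt, x < y →
        x + rk Tt x * (k-1) < y + rk Tt y * (k-1) := by
      intro x hx y hy hxy
      have h5 := rk_lt hx hxy
      have h6 : rk Tt x * (k-1) ≤ rk Tt y * (k-1) := Nat.mul_le_mul_right _ (le_of_lt h5)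
      omega
    simp only [Finset.image_image]
    have : ∀ y ∈ Tt, ((fun x => x - rk (Tt.image (fun y => y + rk Tt y * (k-1))) x * (k-1)) ∘
        (fun y => y + rk Tt y * (k-1))) y = y := by
      intro y hy
      simp only [Function.comp]
      rw [rk_image hmono hy]
      omega
    rw [Finset.image_congr (fun y hy => this y hy)]
    simp

def isShort (k : ℕ) (B : Finset ℕ) : Prop := ∃ i, B = Finset.Ico i (i+k)

noncomputable def shorts (k : ℕ) (P : Finset (Finset ℕ)) : Finset (Finset ℕ) :=
  P.filter (isShort k)

noncomputable def start (B : Finset ℕ) : ℕ := sInf (B : Set ℕ)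

lemma start_Ico {k i : ℕ} (hk : 1 ≤ k) : start (Finset.Ico i (i+k)) = i := by
  apply le_antisymm
  · exact Nat.sInf_le (by simp; omega)
  · exact le_csInf ⟨i, by simp; omega⟩ (fun x hx => by simp at hx; omega)

lemma short_eq {k : ℕ} {B : Finset ℕ} (hk : 1 ≤ k) (h : isShort k B) :
    B = Finset.Ico (start B) (start B + k) := by
  obtain ⟨i, rfl⟩ := h
  rw [start_Ico hk]

lemma pok_sdiff {k : ℕ} {s : Finset ℕ} {P J : Finset (Finset ℕ)}
    (hP : pok k s P) (hJ : J ⊆ P) : pok k (s \ J.biUnion id) (P \ J) := by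
  refine ⟨fun C hC => hP.1 C (Finset.mem_sdiff.1 hC).1,
    hP.2.1.subset (by intro x hx; exact Finset.mem_coe.2 (Finset.mem_sdiff.1 hx).1), ?_⟩
  ext x
  rw [mem_sup_id_iff, Finset.mem_sdiff, Finset.mem_biUnion]
  constructor
  · rintro ⟨B, hB, hxB⟩
    rw [Finset.mem_sdiff] at hB
    refine ⟨(pok_mem_sup_iff hP).2 ⟨B, hB.1, hxB⟩, ?_⟩
    rintro ⟨C, hC, hxC⟩
    rcases eq_or_ne C B with rfl | hne
    · exact hB.2 hC
    · exact absurd hxB (Finset.disjoint_left.1 (hP.2.1 (hJ hC) hB.1 hne) hxC)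
  · rintro ⟨hxs, hnx⟩
    obtain ⟨B, hB, hxB⟩ := (pok_mem_sup_iff hP).1 hxs
    refine ⟨B, Finset.mem_sdiff.2 ⟨hB, fun hBJ => hnx ⟨B, hBJ, hxB⟩⟩, hxB⟩

lemma pok_union {k : ℕ} {s : Finset ℕ} {Q R : Finset (Finset ℕ)}
    (hQ : pok k (s \ R.biUnion id) Q)
    (hRk : ∀ B ∈ R, B.card = k)
    (hRd : (R : Set (Finset ℕ)).PairwiseDisjoint id)
    (hRs : R.biUnion id ⊆ s) : pok k s (Q ∪ R) := by
  have hQU : ∀ B ∈ Q, ∀ x ∈ B, x ∉ R.biUnion id := by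
    intro B hB x hx
    exact (Finset.mem_sdiff.1 (pok_subset hQ hB hx)).2
  refine ⟨?_, ?_, ?_⟩
  · intro B hB
    rcases Finset.mem_union.1 hB with hB | hB
    · exact hQ.1 B hB
    · exact hRk B hB
  · intro B hB C hC hne
    simp only [Finset.coe_union, Set.mem_union, Finset.mem_coe] at hB hC
    have cross : ∀ B ∈ Q, ∀ C ∈ R, Disjoint (id B) (id C) := by
      intro B hB C hC
      exact Finset.disjoint_left.2 (fun x hxB hxC =>
        hQU B hB x hxB (Finset.mem_biUnion.2 ⟨C, hC, hxC⟩))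
    rcases hB with hB | hB <;> rcases hC with hC | hC
    · exact hQ.2.1 hB hC hne
    · exact cross B hB C hC
    · exact (cross C hC B hB).symm
    · exact hRd hB hC hne
  · rw [Finset.sup_union, hQ.2.2, ← Finset.sup_eq_biUnion] at *
    rw [Finset.sup_eq_biUnion] at hRs ⊢
    rw [← Finset.sup_eq_biUnion]
    exact Finset.sdiff_union_of_subset (by rwa [Finset.sup_eq_biUnion])

lemma disjoint_QR {k : ℕ} {s : Finset ℕ} {Q R : Finset (Finset ℕ)} (hk : 1 ≤ k)
    (hQ : pok k (s \ R.biUnion id) Q) (hRk : ∀ B ∈ R, B.card = k) : Disjoint Q R := by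
  rw [Finset.disjoint_left]
  intro B hBQ hBR
  have hne : B.Nonempty := by
    rw [← Finset.card_pos, hRk B hBR]
    omega
  obtain ⟨x, hx⟩ := hne
  exact (Finset.mem_sdiff.1 (pok_subset hQ hBQ hx)).2 (Finset.mem_biUnion.2 ⟨B, hBR, hx⟩)

lemma card_pairs {k n j : ℕ} (hk : 1 ≤ k) :
    ((diag k (Finset.range (k*n))).sigma (fun P => (shorts k P).powersetCard j)).card =
    ((startsSet k n j).sigma
      (fun S => diag k (Finset.range (k*n) \ S.biUnion (fun i => Finset.Ico i (i+k))))).card := by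
  refine Finset.card_bij'
    (fun PJ _ => (⟨PJ.2.image start, PJ.1 \ PJ.2⟩ : Σ _ : Finset ℕ, Finset (Finset ℕ)))
    (fun SQ _ => (⟨SQ.2 ∪ SQ.1.image (fun i => Finset.Ico i (i+k)),
      SQ.1.image (fun i => Finset.Ico i (i+k))⟩ : Σ _ : Finset (Finset ℕ), Finset (Finset ℕ)))
    ?hi ?hj ?li ?ri
  case hi =>
    rintro ⟨P, J⟩ hPJ
    rw [Finset.mem_sigma, mem_diagk, Finset.mem_powersetCard] at hPJ
    obtain ⟨hP, hJs, hJcard⟩ := hPJ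
    have hJP : J ⊆ P := fun B hB => (Finset.mem_filter.1 (hJs hB)).1
    have hJshort : ∀ B ∈ J, isShort k B := fun B hB => (Finset.mem_filter.1 (hJs hB)).2
    have hstart : ∀ B ∈ J, B = Finset.Ico (start B) (start B + k) :=
      fun B hB => short_eq hk (hJshort B hB)
    have hbnd : ∀ B ∈ J, start B + k ≤ k*n := by
      intro B hB
      have h1 : start B + k - 1 ∈ B := by
        nth_rewrite 1 [hstart B hB]
        rw [Finset.mem_Ico]
        omega
      have := pok_subset hP (hJP hB) h1
      rw [Finset.mem_range] at this
      omega
    rw [Finset.mem_sigma, mem_diagk]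
    constructor
    · rw [mem_startsSet hk]
      refine ⟨?_, ?_, ?_⟩
      · rw [Finset.card_image_of_injOn, hJcard]
        intro B hB C hC hBC
        rw [hstart B hB, hstart C hC, hBC]
      · intro x hx
        rw [Finset.mem_image] at hx
        obtain ⟨B, hB, rfl⟩ := hx
        exact hbnd B hB
      · intro x hx y hy hxy
        rw [Finset.mem_image] at hx hy
        obtain ⟨B, hB, rfl⟩ := hx
        obtain ⟨C, hC, rfl⟩ := hy
        have hBC : B ≠ C := fun h => by rw [h] at hxy; omega
        by_contra hcon
        have hyB : start C ∈ B := by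
          rw [hstart B hB, Finset.mem_Ico]
          omega
        have hyC : start C ∈ C := by
          nth_rewrite 1 [hstart C hC]
          rw [Finset.mem_Ico]
          omega
        exact absurd hyC (Finset.disjoint_left.1 (hP.2.1 (hJP hB) (hJP hC) hBC) hyB)
    · have hU : (J.image start).biUnion (fun i => Finset.Ico i (i+k)) = J.biUnion id := by
        ext x
        simp only [Finset.mem_biUnion, Finset.mem_image, id]
        constructor
        · rintro ⟨i, ⟨B, hB, rfl⟩, hx⟩
          exact ⟨B, hB, by rw [hstart B hB]; exact hx⟩
        · rintro ⟨B, hB, hx⟩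
          refine ⟨start B, ⟨B, hB, rfl⟩, ?_⟩
          rw [← hstart B hB]
          exact hx
      rw [hU]
      exact pok_sdiff hP hJP
  case hj =>
    rintro ⟨S, Q⟩ hSQ
    rw [Finset.mem_sigma, mem_startsSet hk, mem_diagk] at hSQ
    obtain ⟨⟨hScard, hSbnd, hSgap⟩, hQ⟩ := hSQ
    have hU : (S.image (fun i => Finset.Ico i (i+k))).biUnion id =
        S.biUnion (fun i => Finset.Ico i (i+k)) := by
      ext x
      simp only [Finset.mem_biUnion, Finset.mem_image, id]
      constructor
      · rintro ⟨B, ⟨i, hi, rfl⟩, hx⟩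
        exact ⟨i, hi, hx⟩
      · rintro ⟨i, hi, hx⟩
        exact ⟨Finset.Ico i (i+k), ⟨i, hi, rfl⟩, hx⟩
    have hRk : ∀ B ∈ S.image (fun i => Finset.Ico i (i+k)), B.card = k := by
      intro B hB
      rw [Finset.mem_image] at hB
      obtain ⟨i, _, rfl⟩ := hB
      rw [Nat.card_Ico]
      omega
    have hRd : ((S.image (fun i => Finset.Ico i (i+k)) : Finset (Finset ℕ)) :
        Set (Finset ℕ)).PairwiseDisjoint id := by
      intro B hB C hC hne
      simp only [Finset.coe_image, Set.mem_image, Finset.mem_coe] at hB hC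
      obtain ⟨x, hx, rfl⟩ := hB
      obtain ⟨y, hy, rfl⟩ := hC
      have hxy : x ≠ y := fun h => hne (by rw [h])
      rcases lt_or_gt_of_ne hxy with h | h
      · have := hSgap x hx y hy h
        exact Finset.disjoint_left.2 (fun z hz1 hz2 => by
          simp only [id_eq] at hz1 hz2; rw [Finset.mem_Ico] at hz1 hz2
          omega)
      · have := hSgap y hy x hx h
        exact Finset.disjoint_left.2 (fun z hz1 hz2 => by
          simp only [id_eq] at hz1 hz2; rw [Finset.mem_Ico] at hz1 hz2
          omega)
    have hRs : (S.image (fun i => Finset.Ico i (i+k))).biUnion id ⊆ Finset.range (k*n) := by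
      rw [hU]
      intro x hx
      rw [Finset.mem_biUnion] at hx
      obtain ⟨i, hi, hxi⟩ := hx
      rw [Finset.mem_Ico] at hxi
      have := hSbnd i hi
      rw [Finset.mem_range]
      omega
    rw [Finset.mem_sigma, mem_diagk]
    constructor
    · refine pok_union ?_ hRk hRd hRs
      rw [hU]
      exact hQ
    · rw [Finset.mem_powersetCard]
      constructor
      · intro B hB
        rw [shorts, Finset.mem_filter]
        refine ⟨Finset.mem_union_right _ hB, ?_⟩
        rw [Finset.mem_image] at hB
        obtain ⟨i, _, rfl⟩ := hB
        exact ⟨i, rfl⟩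
      · rw [Finset.card_image_of_injOn, hScard]
        intro x hx y hy hxy
        have := congrArg start hxy
        rwa [start_Ico hk, start_Ico hk] at this
  case li =>
    rintro ⟨P, J⟩ hPJ
    rw [Finset.mem_sigma, mem_diagk, Finset.mem_powersetCard] at hPJ
    obtain ⟨hP, hJs, hJcard⟩ := hPJ
    have hJP : J ⊆ P := fun B hB => (Finset.mem_filter.1 (hJs hB)).1
    have hstart : ∀ B ∈ J, B = Finset.Ico (start B) (start B + k) :=
      fun B hB => short_eq hk ((Finset.mem_filter.1 (hJs hB)).2)
    have hback : (J.image start).image (fun i => Finset.Ico i (i+k)) = J := by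
      rw [Finset.image_image]
      rw [Finset.image_congr (g := id) (fun B hB => by
        simp only [Function.comp, id]
        exact (hstart B hB).symm)]
      exact Finset.image_id
    simp only
    rw [hback, Finset.sdiff_union_of_subset hJP]
  case ri =>
    rintro ⟨S, Q⟩ hSQ
    rw [Finset.mem_sigma, mem_startsSet hk, mem_diagk] at hSQ
    obtain ⟨⟨hScard, hSbnd, hSgap⟩, hQ⟩ := hSQ
    have hU : (S.image (fun i => Finset.Ico i (i+k))).biUnion id =
        S.biUnion (fun i => Finset.Ico i (i+k)) := by
      ext x
      simp only [Finset.mem_biUnion, Finset.mem_image, id]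
      constructor
      · rintro ⟨B, ⟨i, hi, rfl⟩, hx⟩
        exact ⟨i, hi, hx⟩
      · rintro ⟨i, hi, hx⟩
        exact ⟨Finset.Ico i (i+k), ⟨i, hi, rfl⟩, hx⟩
    have hRk : ∀ B ∈ S.image (fun i => Finset.Ico i (i+k)), B.card = k := by
      intro B hB
      rw [Finset.mem_image] at hB
      obtain ⟨i, _, rfl⟩ := hB
      rw [Nat.card_Ico]
      omega
    have hdisj : Disjoint Q (S.image (fun i => Finset.Ico i (i+k))) := by
      refine disjoint_QR hk (s := Finset.range (k*n)) ?_ hRk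
      rw [hU]
      exact hQ
    have hS' : (S.image (fun i => Finset.Ico i (i+k))).image start = S := by
      rw [Finset.image_image]
      rw [Finset.image_congr (g := id) (fun i hi => by
        simp only [Function.comp, id]
        exact start_Ico hk)]
      exact Finset.image_id
    simp only
    rw [hS', Finset.union_sdiff_right, Finset.sdiff_eq_self_of_disjoint hdisj]

lemma card_pairs_eq {k n j : ℕ} (hk : 1 ≤ k) (hj : j ≤ n) :
    ((diag k (Finset.range (k*n))).sigma (fun P => (shorts k P).powersetCard j)).card =
    Nat.choose (k*n - j*(k-1)) j * T k (n-j) := by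
  rw [card_pairs hk, Finset.card_sigma]
  have hstep : ∀ S ∈ startsSet k n j,
      (diag k (Finset.range (k*n) \ S.biUnion (fun i => Finset.Ico i (i+k)))).card
        = T k (n-j) := by
    intro S hS
    rw [mem_startsSet hk] at hS
    obtain ⟨hcard, hbd, hgap⟩ := hS
    apply card_diag hk
    have hsub : S.biUnion (fun i => Finset.Ico i (i+k)) ⊆ Finset.range (k*n) := by
      intro x hx
      rw [Finset.mem_biUnion] at hx
      obtain ⟨i, hi, hxi⟩ := hx
      rw [Finset.mem_Ico] at hxi
      have := hbd i hi
      rw [Finset.mem_range]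
      omega
    have hdisj : ∀ x ∈ S, ∀ y ∈ S, x ≠ y →
        Disjoint (Finset.Ico x (x+k)) (Finset.Ico y (y+k)) := by
      intro x hx y hy hxy
      rcases lt_or_gt_of_ne hxy with h | h
      · have := hgap x hx y hy h
        exact Finset.disjoint_left.2 (fun z hz1 hz2 => by
          rw [Finset.mem_Ico] at hz1 hz2; omega)
      · have := hgap y hy x hx h
        exact Finset.disjoint_left.2 (fun z hz1 hz2 => by
          rw [Finset.mem_Ico] at hz1 hz2; omega)
    rw [Finset.card_sdiff_of_subset hsub, Finset.card_range, Finset.card_biUnion hdisj]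
    have h1 : ∑ i ∈ S, (Finset.Ico i (i+k)).card = j * k := by
      rw [Finset.sum_congr rfl (fun i _ => by rw [Nat.card_Ico]; omega : ∀ i ∈ S, _ = k),
        Finset.sum_const, smul_eq_mul, hcard]
    rw [h1]
    have h2 : k*n = k*(n-j) + j*k := by
      conv_lhs => rw [show n = (n-j)+j by omega]
      ring
    omega
  rw [Finset.sum_congr rfl hstep, Finset.sum_const, smul_eq_mul, card_startsSet hk]

lemma diag_card_parts {k n : ℕ} (hk : 1 ≤ k) {P : Finset (Finset ℕ)}
    (hP : P ∈ diag k (Finset.range (k*n))) : P.card = n := by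
  have h := pok_card (mem_diagk.1 hP)
  rw [Finset.card_range] at h
  have h3 : k * n = n * k := by ring
  have h2 : P.card * k = n * k := by omega
  exact Nat.eq_of_mul_eq_mul_right (by omega) h2

lemma shorts_card_le {k n : ℕ} (hk : 1 ≤ k) {P : Finset (Finset ℕ)}
    (hP : P ∈ diag k (Finset.range (k*n))) : (shorts k P).card ≤ n := by
  rw [← diag_card_parts hk hP]
  exact Finset.card_le_card (Finset.filter_subset _ _)

lemma poly_eq {k n : ℕ} (hk : 1 ≤ k) :
    ∑ P ∈ diag k (Finset.range (k*n)), (Polynomial.X : Polynomial ℚ) ^ (shorts k P).card =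
    ∑ j ∈ Finset.range (n+1),
      Polynomial.C
        ((((diag k (Finset.range (k*n))).sigma
          (fun P => (shorts k P).powersetCard j)).card : ℚ)) * (Polynomial.X - 1)^j := by
  have hX : ∀ s : ℕ, s ≤ n → (Polynomial.X : Polynomial ℚ)^s =
      ∑ j ∈ Finset.range (n+1),
        Polynomial.C ((s.choose j : ℚ)) * (Polynomial.X - 1)^j := by
    intro s hs
    have h1 : (Polynomial.X : Polynomial ℚ) = (Polynomial.X - 1) + 1 := by ring
    conv_lhs => rw [h1]
    rw [add_pow]
    rw [Finset.sum_subset (show Finset.range (s+1) ⊆ Finset.range (n+1) from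
      Finset.range_subset_range.2 (by omega))]
    · apply Finset.sum_congr rfl
      intro m _
      rw [one_pow, mul_one]
      rw [mul_comm, ← Polynomial.C_eq_natCast]
    · intro j _ hj
      rw [Finset.mem_range, not_lt] at hj
      rw [Nat.choose_eq_zero_of_lt (by omega)]
      simp
  rw [Finset.sum_congr rfl (fun P hP => hX _ (shorts_card_le hk hP))]
  rw [Finset.sum_comm]
  apply Finset.sum_congr rfl
  intro j _
  rw [← Finset.sum_mul, ← map_sum, Finset.card_sigma]
  congr 2
  rw [Nat.cast_sum]
  apply Finset.sum_congr rfl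
  intro P _
  rw [Finset.card_powersetCard]

lemma coeff_poly {k n ℓ : ℕ} :
    (∑ P ∈ diag k (Finset.range (k*n)),
      (Polynomial.X : Polynomial ℚ) ^ (shorts k P).card).coeff ℓ =
    (((diag k (Finset.range (k*n))).filter (fun P => (shorts k P).card = ℓ)).card : ℚ) := by
  rw [Polynomial.finset_sum_coeff]
  rw [Finset.sum_congr rfl (fun P _ => Polynomial.coeff_X_pow _ _)]
  rw [Finset.sum_boole]
  congr 1
  have : (diag k (Finset.range (k*n))).filter (fun P => ℓ = (shorts k P).card) =
      (diag k (Finset.range (k*n))).filter (fun P => (shorts k P).card = ℓ) := by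
    apply Finset.filter_congr
    intro P _
    simp [eq_comm]
  rw [← this]


/-- `dCount k n ℓ` is the number of linear `k`-chord diagrams of length `k*n`
with exactly `ℓ` short chords (blocks of `k` consecutive vertices). -/
noncomputable def dCount (k n ℓ : ℕ) : ℕ :=
  Nat.card {P : Finpartition (Finset.range (k * n)) //
    (∀ B ∈ P.parts, B.card = k) ∧
    (P.parts.filter (fun B => ∃ i, B = Finset.Ico i (i + k))).card = ℓ}

lemma dCount_eq {k n ℓ : ℕ} (hk : 1 ≤ k) : dCount k n ℓ =
    ((diag k (Finset.range (k*n))).filter (fun P => (shorts k P).card = ℓ)).card := by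
  rw [dCount]
  have e : {P : Finpartition (Finset.range (k * n)) //
      (∀ B ∈ P.parts, B.card = k) ∧
      (P.parts.filter (fun B => ∃ i, B = Finset.Ico i (i + k))).card = ℓ} ≃
      {X // X ∈ (diag k (Finset.range (k*n))).filter (fun P => (shorts k P).card = ℓ)} := by
    refine ⟨fun P => ⟨P.1.parts, ?_⟩, fun Y => ⟨⟨Y.1, ?_, ?_, ?_⟩, ?_⟩, ?_, ?_⟩
    · rw [Finset.mem_filter, mem_diagk]
      obtain ⟨P, hP1, hP2⟩ := P
      refine ⟨⟨hP1, ?_, P.sup_parts⟩, ?_⟩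
      · exact Finset.supIndep_iff_pairwiseDisjoint.1 P.supIndep
      · exact hP2
    · have hX := Y.2
      rw [Finset.mem_filter, mem_diagk] at hX
      exact Finset.supIndep_iff_pairwiseDisjoint.2 hX.1.2.1
    · have hX := Y.2
      rw [Finset.mem_filter, mem_diagk] at hX
      exact hX.1.2.2
    · have hX := Y.2
      rw [Finset.mem_filter, mem_diagk] at hX
      intro hbot
      have := hX.1.1 _ hbot
      simp at this
      omega
    · have hX := Y.2
      rw [Finset.mem_filter, mem_diagk] at hX
      exact ⟨hX.1.1, hX.2⟩
    · intro P
      apply Subtype.ext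
      apply Finpartition.ext
      rfl
    · intro Y
      apply Subtype.ext
      rfl
  rw [Nat.card_congr e, Nat.card_eq_fintype_card, Fintype.card_coe]

/-- The number of linear `k`-chord diagrams of length `kn` with exactly `ℓ` short chords
equals the coefficient of `z^ℓ` in
`Σ_{j=0}^n ((k(n-j))!/((k!)^{n-j}(n-j)!)) C(kn - j(k-1), j) (z-1)^j`. -/
theorem stmt5 (k n ℓ : ℕ) (hk : 2 ≤ k) :
    (dCount k n ℓ : ℚ) =
      (∑ j ∈ Finset.range (n + 1),
        Polynomial.C (((Nat.factorial (k * (n - j)) : ℚ) /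
            (Nat.factorial k ^ (n - j) * Nat.factorial (n - j))) *
          (Nat.choose (k * n - j * (k - 1)) j : ℚ)) *
        (Polynomial.X - 1) ^ j).coeff ℓ := by
  have hk1 : 1 ≤ k := by omega
  have hpoly : (∑ j ∈ Finset.range (n + 1),
      Polynomial.C (((Nat.factorial (k * (n - j)) : ℚ) /
          (Nat.factorial k ^ (n - j) * Nat.factorial (n - j))) *
        (Nat.choose (k * n - j * (k - 1)) j : ℚ)) *
      (Polynomial.X - 1) ^ j) =
      ∑ P ∈ diag k (Finset.range (k*n)),
        (Polynomial.X : Polynomial ℚ) ^ (shorts k P).card := by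
    rw [poly_eq hk1]
    apply Finset.sum_congr rfl
    intro j hj
    rw [Finset.mem_range] at hj
    have hj' : j ≤ n := by omega
    congr 1
    rw [card_pairs_eq hk1 hj']
    have hT := T_factorial hk1 (n-j)
    have hTq : (T k (n-j) : ℚ) * ((Nat.factorial k : ℚ) ^ (n-j) *
        ((Nat.factorial (n-j) : ℚ))) = (Nat.factorial (k*(n-j)) : ℚ) := by
      exact_mod_cast congrArg (Nat.cast : ℕ → ℚ) hT
    have hden : ((Nat.factorial k : ℚ) ^ (n-j) * (Nat.factorial (n-j) : ℚ)) ≠ 0 := by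
      positivity
    rw [← hTq]
    push_cast
    field_simp
  rw [dCount_eq hk1]
  conv_rhs => rw [hpoly]
  rw [coeff_poly]
end

section
/- The numbers d_{n,ℓ} of linear k-chord diagrams of length kn with exactly ℓ short chords satisfy the recurrence ℓ · d_{n,ℓ} = (kn - ℓ(k-1)) · d_{n-1,ℓ-1} + ℓ(k-1) · d_{n-1,ℓ} for n ≥ 1 and ℓ ≥ 1. -/
open scoped Classical

namespace Stmt7
open Finset


/-- Insertion map: shift positions `≥ p` up by `k`. -/
def insF (k p : ℕ) : ℕ → ℕ := fun j => if j < p then j else j + k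
/-- Deletion map: shift positions `≥ i` down by `k`. -/
def delF (k i : ℕ) : ℕ → ℕ := fun j => if j < i then j else j - k

lemma insF_strictMono (k p : ℕ) : StrictMono (insF k p) := by
  intro a b h; unfold insF; split_ifs <;> omega

lemma insF_inj (k p : ℕ) : Function.Injective (insF k p) :=
  (insF_strictMono k p).injective

lemma delF_insF (k i j : ℕ) : delF k i (insF k i j) = j := by
  unfold insF delF; split_ifs <;> omega

lemma insF_not_mem (k p j : ℕ) : insF k p j ∉ Ico p (p + k) := by
  unfold insF; split_ifs <;> simp <;> omega

lemma insF_delF {k i j : ℕ} (h : j ∉ Ico i (i + k)) : insF k i (delF k i j) = j := by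
  simp only [mem_Ico, not_and, not_lt] at h
  unfold insF delF; split_ifs <;> omega

lemma mem_image_insF {k p : ℕ} {C : Finset ℕ} {y : ℕ} :
    y ∈ C.image (insF k p) ↔ y ∉ Ico p (p + k) ∧ delF k p y ∈ C := by
  constructor
  · rintro h
    obtain ⟨x, hx, rfl⟩ := mem_image.1 h
    exact ⟨insF_not_mem k p x, by rw [delF_insF]; exact hx⟩
  · rintro ⟨h1, h2⟩
    exact mem_image.2 ⟨_, h2, insF_delF h1⟩

lemma mem_image_delF {k i : ℕ} {C : Finset ℕ} (hC : Disjoint C (Ico i (i + k))) {y : ℕ} :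
    y ∈ C.image (delF k i) ↔ insF k i y ∈ C := by
  constructor
  · rintro h
    obtain ⟨x, hx, rfl⟩ := mem_image.1 h
    rwa [insF_delF (Finset.disjoint_left.1 hC hx)]
  · intro h
    exact mem_image.2 ⟨_, h, delF_insF k i y⟩

lemma card_image_delF {k i : ℕ} {C : Finset ℕ} (hC : Disjoint C (Ico i (i + k))) :
    (C.image (delF k i)).card = C.card := by
  apply Finset.card_image_of_injOn
  intro x hx y hy hxy
  have hx' := Finset.disjoint_left.1 hC hx
  have hy' := Finset.disjoint_left.1 hC hy
  rw [← insF_delF hx', ← insF_delF hy', hxy]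

lemma image_insF_image_delF {k i : ℕ} {C : Finset ℕ} (hC : Disjoint C (Ico i (i + k))) :
    (C.image (delF k i)).image (insF k i) = C := by
  rw [Finset.image_image]
  rw [show insF k i ∘ delF k i = fun x => insF k i (delF k i x) from rfl]
  calc C.image _ = C.image id := Finset.image_congr (fun x hx => insF_delF (Finset.disjoint_left.1 hC hx))
    _ = C := Finset.image_id

lemma sup_image_comm (t : Finset (Finset ℕ)) (f : ℕ → ℕ) :
    (t.image (Finset.image f)).sup id = (t.sup id).image f := by
  ext y
  simp only [Finset.mem_sup, Finset.mem_image, id]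
  constructor
  · rintro ⟨B, hB, hy⟩
    obtain ⟨C, hC, rfl⟩ := hB
    obtain ⟨x, hx, rfl⟩ := mem_image.1 hy
    exact ⟨x, ⟨C, hC, hx⟩, rfl⟩
  · rintro ⟨x, ⟨C, hC, hx⟩, rfl⟩
    exact ⟨C.image f, ⟨C, hC, rfl⟩, mem_image_of_mem _ hx⟩



/-- A block is short iff it is an interval of length `k`. -/
def short (k : ℕ) (B : Finset ℕ) : Prop := ∃ i, B = Finset.Ico i (i + k)

/-- `p` lies strictly inside the short block `C`. -/
def insideShort (k p : ℕ) (C : Finset ℕ) : Prop :=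
  ∃ a, C = Finset.Ico a (a + k) ∧ a < p ∧ p < a + k

lemma Ico_k_inj {k a b : ℕ} (hk : 1 ≤ k) (h : Ico a (a + k) = Ico b (b + k)) : a = b := by
  have ha : a ∈ Ico b (b + k) := h ▸ (mem_Ico.2 ⟨le_refl a, by omega⟩)
  have hb : b ∈ Ico a (a + k) := h ▸ (mem_Ico.2 ⟨le_refl b, by omega⟩)
  simp only [mem_Ico] at ha hb; omega

lemma image_short_iff {k p : ℕ} (hk : 1 ≤ k) {C : Finset ℕ} :
    short k (C.image (insF k p)) ↔ short k C ∧ ¬ insideShort k p C := by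
  constructor
  · rintro ⟨b, hb⟩
    have h1 : b ∉ Ico p (p + k) := by
      have : b ∈ C.image (insF k p) := hb ▸ (mem_Ico.2 ⟨le_refl b, by omega⟩)
      exact (mem_image_insF.1 this).1
    have h2 : b + k - 1 ∉ Ico p (p + k) := by
      have : b + k - 1 ∈ C.image (insF k p) := hb ▸ (mem_Ico.2 ⟨by omega, by omega⟩)
      exact (mem_image_insF.1 this).1
    have h3 : p ∉ Ico b (b + k) := by
      intro hp
      have : p ∈ C.image (insF k p) := hb ▸ hp
      exact (mem_image_insF.1 this).1 (mem_Ico.2 ⟨le_refl p, by omega⟩)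
    simp only [mem_Ico, not_and, not_lt, not_le] at h1 h2 h3
    have hCeq : C = (Ico b (b + k)).image (delF k p) := by
      rw [← hb, Finset.image_image]
      exact ((Finset.image_congr (fun x _ => delF_insF k p x)).trans Finset.image_id).symm
    have hcase : b + k ≤ p ∨ p + k ≤ b := by omega
    have hdisj : Disjoint (Ico b (b + k)) (Ico p (p + k)) := by
      simp only [Finset.disjoint_left, mem_Ico]; omega
    rcases hcase with hc | hc
    · have : C = Ico b (b + k) := by
        rw [hCeq]; ext y
        rw [mem_image_delF hdisj]
        simp only [mem_Ico, insF]
        split_ifs <;> omega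
      refine ⟨⟨b, this⟩, ?_⟩
      rintro ⟨a, ha, hap, hpa⟩
      have := Ico_k_inj hk (ha ▸ this)
      omega
    · have : C = Ico (b - k) (b - k + k) := by
        rw [hCeq]; ext y
        rw [mem_image_delF hdisj]
        simp only [mem_Ico, insF]
        split_ifs <;> omega
      refine ⟨⟨b - k, this⟩, ?_⟩
      rintro ⟨a, ha, hap, hpa⟩
      have := Ico_k_inj hk (ha ▸ this)
      omega
  · rintro ⟨⟨a, rfl⟩, hni⟩
    have hcase : a + k ≤ p ∨ p ≤ a := by
      by_contra hcon
      push_neg at hcon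
      exact hni ⟨a, rfl, by omega, by omega⟩
    rcases hcase with hc | hc
    · refine ⟨a, ?_⟩
      ext y
      rw [mem_image_insF]
      simp only [mem_Ico, delF]
      split_ifs <;> omega
    · refine ⟨a + k, ?_⟩
      ext y
      rw [mem_image_insF]
      simp only [mem_Ico, delF]
      split_ifs <;> omega


lemma image_insF_range {k p m : ℕ} (hp : p ≤ m) :
    (range m).image (insF k p) = range (m + k) \ Ico p (p + k) := by
  ext y
  rw [mem_image_insF]
  simp only [mem_sdiff, mem_range, mem_Ico, delF]
  split_ifs <;> omega

lemma disj_image_newB (k p : ℕ) (C : Finset ℕ) :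
    Disjoint (C.image (insF k p)) (Ico p (p + k)) := by
  rw [Finset.disjoint_left]
  intro y hy
  exact (mem_image_insF.1 hy).1

/-- Insert a new short block at position `p`. -/
def insP (k p m : ℕ) (hk : 1 ≤ k) (hp : p ≤ m) (P : Finpartition (range m)) :
    Finpartition (range (m + k)) where
  parts := P.parts.image (Finset.image (insF k p)) ∪ {Ico p (p + k)}
  supIndep := by
    rw [Finset.supIndep_iff_pairwiseDisjoint]
    intro X hX Y hY hXY
    simp only [coe_union, coe_singleton, Set.mem_union, mem_coe,
      Set.mem_singleton_iff, Finset.mem_image] at hX hY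
    rcases hX with ⟨C, hC, rfl⟩ | rfl
    · rcases hY with ⟨D, hD, rfl⟩ | rfl
      · have hCD : C ≠ D := fun h => hXY (by rw [h])
        exact (Finset.disjoint_image (insF_inj k p)).2 (P.disjoint hC hD hCD)
      · exact disj_image_newB k p C
    · rcases hY with ⟨D, hD, rfl⟩ | rfl
      · exact (disj_image_newB k p D).symm
      · exact absurd rfl hXY
  sup_parts := by
    rw [Finset.sup_union, Finset.sup_singleton, sup_image_comm, P.sup_parts,
      image_insF_range hp, id, Finset.sup_eq_union,
      Finset.sdiff_union_of_subset]
    intro x hx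
    simp only [mem_Ico] at hx
    simp only [mem_range]
    omega
  bot_notMem := by
    simp only [Finset.bot_eq_empty, Finset.mem_union, Finset.mem_image,
      Finset.mem_singleton, not_or]
    constructor
    · rintro ⟨C, hC, hCe⟩
      have : C = ∅ := Finset.image_eq_empty.1 hCe
      rw [this] at hC
      exact P.bot_notMem hC
    · intro h
      have : p ∈ (∅ : Finset ℕ) := h ▸ mem_Ico.2 ⟨le_refl p, by omega⟩
      simp at this

lemma insP_parts (k p m : ℕ) (hk : 1 ≤ k) (hp : p ≤ m) (P : Finpartition (range m)) :
    (insP k p m hk hp P).parts = P.parts.image (Finset.image (insF k p)) ∪ {Ico p (p + k)} :=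
  rfl

lemma newB_not_mem_images (k p : ℕ) (hk : 1 ≤ k) (t : Finset (Finset ℕ)) :
    Ico p (p + k) ∉ t.image (Finset.image (insF k p)) := by
  intro h
  obtain ⟨C, _, hC⟩ := Finset.mem_image.1 h
  have hp : p ∈ Ico p (p + k) := mem_Ico.2 ⟨le_refl p, by omega⟩
  rw [← hC] at hp
  exact (mem_image_insF.1 hp).1 (mem_Ico.2 ⟨le_refl p, by omega⟩)

lemma insP_card_parts {k p m : ℕ} (hk : 1 ≤ k) (hp : p ≤ m) (P : Finpartition (range m))
    (hcard : ∀ C ∈ P.parts, C.card = k) :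
    ∀ B ∈ (insP k p m hk hp P).parts, B.card = k := by
  intro B hB
  rw [insP_parts, Finset.mem_union, Finset.mem_image, Finset.mem_singleton] at hB
  rcases hB with ⟨C, hC, rfl⟩ | rfl
  · rw [Finset.card_image_of_injective _ (insF_inj k p)]
    exact hcard C hC
  · rw [Nat.card_Ico]; omega

lemma insP_filter_short {k p m : ℕ} (hk : 1 ≤ k) (hp : p ≤ m) (P : Finpartition (range m)) :
    ((insP k p m hk hp P).parts.filter (short k)).card
      = (P.parts.filter (fun C => short k C ∧ ¬ insideShort k p C)).card + 1 := by
  rw [insP_parts, Finset.filter_union, Finset.filter_singleton]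
  rw [if_pos ⟨p, rfl⟩]
  rw [Finset.filter_image]
  rw [Finset.card_union_of_disjoint, Finset.card_singleton,
    Finset.card_image_of_injective _ (Finset.image_injective (insF_inj k p))]
  · congr 1
    apply Finset.card_nbij id (fun x hx => ?_) (Set.injOn_id _) (fun x hx => ⟨x, ?_, rfl⟩)
    · simp only [Finset.mem_coe, Finset.mem_filter] at *
      exact ⟨hx.1, (image_short_iff hk).1 hx.2⟩
    · simp only [Finset.mem_coe, Finset.mem_filter] at *
      exact ⟨hx.1, (image_short_iff hk).2 hx.2⟩
  · rw [Finset.disjoint_singleton_right]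
    exact newB_not_mem_images k p hk _


lemma part_bound {k i m : ℕ} (hk : 1 ≤ k) {P : Finpartition (range (m + k))}
    (hB : Ico i (i + k) ∈ P.parts) : i + k ≤ m + k := by
  have h1 : i + k - 1 ∈ Ico i (i + k) := mem_Ico.2 ⟨by omega, by omega⟩
  have h2 : i + k - 1 ∈ range (m + k) := P.le hB h1
  rw [mem_range] at h2
  omega

lemma erase_disj {k i m : ℕ} {P : Finpartition (range (m + k))}
    (hB : Ico i (i + k) ∈ P.parts) {C : Finset ℕ} (hC : C ∈ P.parts.erase (Ico i (i + k))) :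
    Disjoint C (Ico i (i + k)) := by
  obtain ⟨hne, hmem⟩ := Finset.mem_erase.1 hC
  exact P.disjoint hmem hB hne

lemma sup_erase {m : ℕ} (P : Finpartition (range (m + k))) {B : Finset ℕ} (hB : B ∈ P.parts) :
    (P.parts.erase B).sup id = range (m + k) \ B := by
  ext x
  simp only [Finset.mem_sup, Finset.mem_erase, id, mem_sdiff]
  constructor
  · rintro ⟨C, ⟨hne, hC⟩, hx⟩
    refine ⟨P.le hC hx, fun hxB => ?_⟩
    exact Finset.disjoint_left.1 (P.disjoint hC hB hne) hx hxB
  · rintro ⟨hx, hxB⟩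
    have : x ∈ P.parts.sup id := by rw [P.sup_parts]; exact hx
    obtain ⟨C, hC, hxC⟩ := Finset.mem_sup.1 this
    exact ⟨C, ⟨fun h => hxB (h ▸ hxC), hC⟩, hxC⟩

/-- Delete the short block `Ico i (i+k)` and close the gap. -/
def delP (k i m : ℕ) (hk : 1 ≤ k) (P : Finpartition (range (m + k)))
    (hB : Ico i (i + k) ∈ P.parts) : Finpartition (range m) where
  parts := (P.parts.erase (Ico i (i + k))).image (Finset.image (delF k i))
  supIndep := by
    rw [Finset.supIndep_iff_pairwiseDisjoint]
    intro X hX Y hY hXY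
    simp only [coe_image, Set.mem_image, mem_coe] at hX hY
    obtain ⟨C, hC, rfl⟩ := hX
    obtain ⟨D, hD, rfl⟩ := hY
    show Disjoint _ _
    rw [Finset.disjoint_left]
    intro y hyC hyD
    simp only [id_eq] at hyC hyD
    rw [mem_image_delF (erase_disj hB hC)] at hyC
    rw [mem_image_delF (erase_disj hB hD)] at hyD
    have hCD : C ≠ D := fun h => hXY (by rw [h])
    exact Finset.disjoint_left.1
      (P.disjoint (Finset.mem_erase.1 hC).2 (Finset.mem_erase.1 hD).2
        (fun h => hCD h)) hyC hyD
  sup_parts := by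
    rw [sup_image_comm, sup_erase P hB]
    ext y
    rw [mem_image_delF Finset.sdiff_disjoint]
    have hiM := part_bound hk hB
    simp only [mem_sdiff, mem_range, mem_Ico, insF]
    split_ifs <;> omega
  bot_notMem := by
    simp only [Finset.bot_eq_empty, Finset.mem_image, not_exists]
    rintro C ⟨hC, hCe⟩
    have : C = ∅ := Finset.image_eq_empty.1 hCe
    rw [this] at hC
    exact P.bot_notMem (Finset.mem_erase.1 hC).2

lemma delP_parts (k i m : ℕ) (hk : 1 ≤ k) (P : Finpartition (range (m + k)))
    (hB : Ico i (i + k) ∈ P.parts) :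
    (delP k i m hk P hB).parts
      = (P.parts.erase (Ico i (i + k))).image (Finset.image (delF k i)) := rfl

lemma delP_card_parts {k i m : ℕ} (hk : 1 ≤ k) (P : Finpartition (range (m + k)))
    (hB : Ico i (i + k) ∈ P.parts) (hcard : ∀ C ∈ P.parts, C.card = k) :
    ∀ B ∈ (delP k i m hk P hB).parts, B.card = k := by
  intro B hBm
  rw [delP_parts] at hBm
  obtain ⟨C, hC, rfl⟩ := Finset.mem_image.1 hBm
  rw [card_image_delF (erase_disj hB hC)]
  exact hcard C (Finset.mem_erase.1 hC).2

lemma insP_delP {k i m : ℕ} (hk : 1 ≤ k) (P : Finpartition (range (m + k)))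
    (hB : Ico i (i + k) ∈ P.parts) (hi : i ≤ m) :
    (insP k i m hk hi (delP k i m hk P hB)).parts = P.parts := by
  rw [insP_parts, delP_parts, Finset.image_image]
  have h1 : (P.parts.erase (Ico i (i + k))).image
      ((Finset.image (insF k i)) ∘ (Finset.image (delF k i))) = P.parts.erase (Ico i (i + k)) := by
    have := Finset.image_congr (s := P.parts.erase (Ico i (i + k)))
      (f := (Finset.image (insF k i)) ∘ (Finset.image (delF k i))) (g := id)
      (fun C hC => image_insF_image_delF (erase_disj hB hC))
    rw [this, Finset.image_id]
  rw [h1, Finset.union_comm, ← Finset.insert_eq, Finset.insert_erase hB]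


lemma card_filter_short_split (k p : ℕ) (s : Finset (Finset ℕ)) :
    (s.filter (short k)).card
      = (s.filter (fun C => short k C ∧ ¬ insideShort k p C)).card
        + (s.filter (fun C => short k C ∧ insideShort k p C)).card := by
  have h1 : s.filter (fun C => short k C ∧ ¬ insideShort k p C)
      = (s.filter (short k)).filter (fun C => ¬ insideShort k p C) :=
    (Finset.filter_filter _ _ _).symm
  have h2 : s.filter (fun C => short k C ∧ insideShort k p C)
      = (s.filter (short k)).filter (insideShort k p) :=
    (Finset.filter_filter _ _ _).symm
  rw [h1, h2, ← Finset.card_union_of_disjoint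
      (Finset.disjoint_filter_filter_not (s.filter (short k)) (s.filter (short k)) (insideShort k p)).symm,
    Finset.union_comm, Finset.filter_union_filter_not_eq]

lemma mem_of_inside {k p : ℕ} {C : Finset ℕ} (h : insideShort k p C) : p ∈ C := by
  obtain ⟨a, rfl, h1, h2⟩ := h
  exact mem_Ico.2 ⟨by omega, h2⟩

lemma card_filter_inside_le_one {M : ℕ} (k p : ℕ) (P : Finpartition (range M)) :
    (P.parts.filter (fun C => short k C ∧ insideShort k p C)).card ≤ 1 := by
  rw [Finset.card_le_one]
  intro C hC D hD
  rw [Finset.mem_filter] at hC hD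
  by_contra hne
  exact Finset.disjoint_left.1 (P.disjoint hC.1 hD.1 hne)
    (mem_of_inside hC.2.2) (mem_of_inside hD.2.2)

/-- the interior of a block: everything except its minimum. -/
def intr (C : Finset ℕ) : Finset ℕ := C.filter (fun x => ∃ y ∈ C, y < x)

lemma intr_Ico {k a : ℕ} (hk : 1 ≤ k) : intr (Ico a (a + k)) = Ico (a + 1) (a + k) := by
  ext x
  simp only [intr, Finset.mem_filter, mem_Ico]
  constructor
  · rintro ⟨⟨h1, h2⟩, y, hy, hyx⟩
    omega
  · rintro ⟨h1, h2⟩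
    exact ⟨⟨by omega, h2⟩, a, ⟨le_refl a, by omega⟩, by omega⟩

noncomputable def goodSet (k m : ℕ) (P : Finpartition (range m)) : Finset ℕ :=
  (range (m + 1)).filter (fun p => ∀ C ∈ P.parts, ¬ insideShort k p C)

noncomputable def badSet (k m : ℕ) (P : Finpartition (range m)) : Finset ℕ :=
  (range (m + 1)).filter (fun p => ∃ C ∈ P.parts, insideShort k p C)

lemma goodSet_card_add (k m : ℕ) (P : Finpartition (range m)) :
    (goodSet k m P).card + (badSet k m P).card = m + 1 := by
  have : goodSet k m P = (range (m + 1)).filter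
      (fun p => ¬ ∃ C ∈ P.parts, insideShort k p C) := by
    apply Finset.filter_congr
    intro p _
    push_neg
    rfl
  rw [this, badSet]
  rw [← Finset.card_union_of_disjoint
    (((range (m+1)).disjoint_filter_filter_not (range (m+1)) _)).symm]
  rw [Finset.union_comm, Finset.filter_union_filter_not_eq, Finset.card_range]

lemma badSet_eq (k m : ℕ) (hk : 1 ≤ k) (P : Finpartition (range m)) :
    badSet k m P = (P.parts.filter (short k)).biUnion intr := by
  ext p
  simp only [badSet, Finset.mem_filter, mem_range, Finset.mem_biUnion]
  constructor
  · rintro ⟨hp, C, hC, a, rfl, h1, h2⟩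
    refine ⟨Ico a (a + k), ⟨hC, a, rfl⟩, ?_⟩
    rw [intr_Ico hk, mem_Ico]
    omega
  · rintro ⟨C, ⟨hC, a, rfl⟩, hpC⟩
    rw [intr_Ico hk, mem_Ico] at hpC
    have hsub : a + k - 1 ∈ range m := P.le hC (mem_Ico.2 ⟨by omega, by omega⟩)
    rw [mem_range] at hsub
    exact ⟨by omega, Ico a (a + k), hC, a, rfl, by omega, by omega⟩

lemma badSet_card {k m : ℕ} (hk : 1 ≤ k) (P : Finpartition (range m)) :
    (badSet k m P).card = (P.parts.filter (short k)).card * (k - 1) := by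
  rw [badSet_eq k m hk P, Finset.card_biUnion]
  · calc (∑ u ∈ P.parts.filter (short k), (intr u).card)
        = ∑ _u ∈ P.parts.filter (short k), (k - 1) := by
          apply Finset.sum_congr rfl
          intro C hC
          obtain ⟨_, a, rfl⟩ := Finset.mem_filter.1 hC
          rw [intr_Ico hk, Nat.card_Ico]
          omega
      _ = (P.parts.filter (short k)).card * (k - 1) := by
          rw [Finset.sum_const, smul_eq_mul]
  · intro C hC D hD hne
    have hCi : intr C ⊆ C := Finset.filter_subset _ _
    have hDi : intr D ⊆ D := Finset.filter_subset _ _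
    exact Finset.disjoint_of_subset_left hCi (Finset.disjoint_of_subset_right hDi
      (P.disjoint (Finset.mem_filter.1 hC).1 (Finset.mem_filter.1 hD).1 hne))


/-- The diagrams we are counting. -/
def Dsub (k N L : ℕ) : Type :=
  {P : Finpartition (Finset.range N) //
    (∀ B ∈ P.parts, B.card = k) ∧ (P.parts.filter (short k)).card = L}

lemma dCount_eq (k n ℓ : ℕ) : dCount k n ℓ = Nat.card (Dsub k (k * n) ℓ) := rfl

noncomputable instance (k N L : ℕ) : Fintype (Dsub k N L) := by
  unfold Dsub; exact Subtype.fintype _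

/-- Diagrams together with a marked short block. -/
def Atype (k M L : ℕ) : Type :=
  {x : Finpartition (Finset.range M) × Finset ℕ //
    (∀ B ∈ x.1.parts, B.card = k) ∧ (x.1.parts.filter (short k)).card = L
      ∧ x.2 ∈ x.1.parts.filter (short k)}

/-- Diagrams together with a marked good insertion position. -/
def B1type (k m L : ℕ) : Type :=
  {y : Finpartition (Finset.range m) × ℕ //
    (∀ B ∈ y.1.parts, B.card = k) ∧ (y.1.parts.filter (short k)).card = L
      ∧ y.2 ∈ goodSet k m y.1}

/-- Diagrams together with a marked bad insertion position. -/
def B2type (k m L : ℕ) : Type :=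
  {y : Finpartition (Finset.range m) × ℕ //
    (∀ B ∈ y.1.parts, B.card = k) ∧ (y.1.parts.filter (short k)).card = L
      ∧ y.2 ∈ badSet k m y.1}

noncomputable def AEquiv (k M L : ℕ) :
    Atype k M L ≃ Σ P : Dsub k M L, {B // B ∈ P.1.parts.filter (short k)} where
  toFun x := ⟨⟨x.1.1, x.2.1, x.2.2.1⟩, ⟨x.1.2, x.2.2.2⟩⟩
  invFun y := ⟨(y.1.1, y.2.1), y.1.2.1, y.1.2.2, y.2.2⟩
  left_inv x := rfl
  right_inv y := rfl

noncomputable def B1Equiv (k m L : ℕ) :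
    B1type k m L ≃ Σ P : Dsub k m L, {p // p ∈ goodSet k m P.1} where
  toFun x := ⟨⟨x.1.1, x.2.1, x.2.2.1⟩, ⟨x.1.2, x.2.2.2⟩⟩
  invFun y := ⟨(y.1.1, y.2.1), y.1.2.1, y.1.2.2, y.2.2⟩
  left_inv x := rfl
  right_inv y := rfl

noncomputable def B2Equiv (k m L : ℕ) :
    B2type k m L ≃ Σ P : Dsub k m L, {p // p ∈ badSet k m P.1} where
  toFun x := ⟨⟨x.1.1, x.2.1, x.2.2.1⟩, ⟨x.1.2, x.2.2.2⟩⟩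
  invFun y := ⟨(y.1.1, y.2.1), y.1.2.1, y.1.2.2, y.2.2⟩
  left_inv x := rfl
  right_inv y := rfl

instance (k m L : ℕ) : Finite (B1type k m L) := Finite.of_equiv _ (B1Equiv k m L).symm
instance (k m L : ℕ) : Finite (B2type k m L) := Finite.of_equiv _ (B2Equiv k m L).symm

lemma card_Atype (k M L : ℕ) : Nat.card (Atype k M L) = L * Nat.card (Dsub k M L) := by
  rw [Nat.card_congr (AEquiv k M L), Nat.card_eq_fintype_card, Fintype.card_sigma,
    Nat.card_eq_fintype_card]
  calc (∑ P : Dsub k M L, Fintype.card {B // B ∈ P.1.parts.filter (short k)})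
      = ∑ _P : Dsub k M L, L := by
        apply Finset.sum_congr rfl
        intro P _
        rw [Fintype.card_coe, P.2.2]
    _ = Finset.univ.card * L := by rw [Finset.sum_const, smul_eq_mul]
    _ = L * Fintype.card (Dsub k M L) := by rw [Finset.card_univ, Nat.mul_comm]

lemma card_B1type {k : ℕ} (hk : 1 ≤ k) (m L : ℕ) :
    Nat.card (B1type k m L) = (m + 1 - L * (k - 1)) * Nat.card (Dsub k m L) := by
  rw [Nat.card_congr (B1Equiv k m L), Nat.card_eq_fintype_card, Fintype.card_sigma,
    Nat.card_eq_fintype_card]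
  calc (∑ P : Dsub k m L, Fintype.card {p // p ∈ goodSet k m P.1})
      = ∑ _P : Dsub k m L, (m + 1 - L * (k - 1)) := by
        apply Finset.sum_congr rfl
        intro P _
        rw [Fintype.card_coe]
        have h1 := goodSet_card_add k m P.1
        have h2 := badSet_card hk P.1
        rw [P.2.2] at h2
        rw [h2] at h1
        exact Nat.eq_sub_of_add_eq h1
    _ = Finset.univ.card * (m + 1 - L * (k - 1)) := by rw [Finset.sum_const, smul_eq_mul]
    _ = _ := by rw [Finset.card_univ, Nat.mul_comm]

lemma card_B2type {k : ℕ} (hk : 1 ≤ k) (m L : ℕ) :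
    Nat.card (B2type k m L) = (L * (k - 1)) * Nat.card (Dsub k m L) := by
  rw [Nat.card_congr (B2Equiv k m L), Nat.card_eq_fintype_card, Fintype.card_sigma,
    Nat.card_eq_fintype_card]
  calc (∑ P : Dsub k m L, Fintype.card {p // p ∈ badSet k m P.1})
      = ∑ _P : Dsub k m L, (L * (k - 1)) := by
        apply Finset.sum_congr rfl
        intro P _
        rw [Fintype.card_coe]
        have h2 := badSet_card hk P.1
        rw [P.2.2] at h2
        exact h2
    _ = Finset.univ.card * (L * (k - 1)) := by rw [Finset.sum_const, smul_eq_mul]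
    _ = _ := by rw [Finset.card_univ, Nat.mul_comm]


lemma inside_short {k p : ℕ} {C : Finset ℕ} (h : insideShort k p C) : short k C :=
  ⟨h.choose, h.choose_spec.1⟩

lemma goodSet_le {k m p : ℕ} {P : Finpartition (range m)} (h : p ∈ goodSet k m P) : p ≤ m := by
  have := (Finset.mem_filter.1 h).1
  rw [Finset.mem_range] at this
  omega

lemma badSet_le {k m p : ℕ} {P : Finpartition (range m)} (h : p ∈ badSet k m P) : p ≤ m := by
  have := (Finset.mem_filter.1 h).1
  rw [Finset.mem_range] at this
  omega

lemma union_singleton_cancel {X Y : Finset (Finset ℕ)} {c : Finset ℕ}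
    (hX : c ∉ X) (hY : c ∉ Y) (h : X ∪ {c} = Y ∪ {c}) : X = Y := by
  ext D
  constructor
  · intro hD
    have : D ∈ Y ∪ {c} := h ▸ (Finset.mem_union_left _ hD)
    rcases Finset.mem_union.1 this with h' | h'
    · exact h'
    · rw [Finset.mem_singleton] at h'
      exact absurd (h' ▸ hD) hX
  · intro hD
    have : D ∈ X ∪ {c} := h.symm ▸ (Finset.mem_union_left _ hD)
    rcases Finset.mem_union.1 this with h' | h'
    · exact h'
    · rw [Finset.mem_singleton] at h'
      exact absurd (h' ▸ hD) hY

lemma insP_inj {k p m : ℕ} (hk : 1 ≤ k) {hp hp' : p ≤ m} {P Q : Finpartition (range m)}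
    (h : (insP k p m hk hp P).parts = (insP k p m hk hp' Q).parts) : P = Q := by
  rw [insP_parts, insP_parts] at h
  have h2 := union_singleton_cancel (newB_not_mem_images k p hk P.parts)
    (newB_not_mem_images k p hk Q.parts) h
  exact Finpartition.ext (Finset.image_injective (Finset.image_injective (insF_inj k p)) h2)

/-- The fundamental bijection: insert a marked short block at the marked position. -/
noncomputable def Phi (k m L : ℕ) (hk : 1 ≤ k) :
    B1type k m L ⊕ B2type k m (L + 1) → Atype k (m + k) (L + 1)
  | Sum.inl ⟨(P, p), hy⟩ =>
      ⟨(insP k p m hk (goodSet_le hy.2.2) P, Ico p (p + k)), by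
        dsimp only
        refine ⟨insP_card_parts hk (goodSet_le hy.2.2) P hy.1, ?_, ?_⟩
        · show ((insP k p m hk (goodSet_le hy.2.2) P).parts.filter (short k)).card = L + 1
          rw [insP_filter_short hk (show p ≤ m from goodSet_le hy.2.2) P]
          have hgood : ∀ C ∈ P.parts, ¬ insideShort k p C :=
            (Finset.mem_filter.1 hy.2.2).2
          have heq : P.parts.filter (fun C => short k C ∧ ¬ insideShort k p C)
              = P.parts.filter (short k) := by
            apply Finset.filter_congr
            intro C hC
            exact and_iff_left (hgood C hC)
          rw [heq, hy.2.1]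
        · rw [Finset.mem_filter, insP_parts]
          exact ⟨Finset.mem_union_right _ (Finset.mem_singleton_self _), p, rfl⟩⟩
  | Sum.inr ⟨(P, p), hy⟩ =>
      ⟨(insP k p m hk (badSet_le hy.2.2) P, Ico p (p + k)), by
        dsimp only
        refine ⟨insP_card_parts hk (badSet_le hy.2.2) P hy.1, ?_, ?_⟩
        · show ((insP k p m hk (badSet_le hy.2.2) P).parts.filter (short k)).card = L + 1
          rw [insP_filter_short hk (show p ≤ m from badSet_le hy.2.2) P]
          have hsplit := card_filter_short_split k p P.parts
          have hle := card_filter_inside_le_one k p P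
          have hbad : ∃ C ∈ P.parts, insideShort k p C :=
            (Finset.mem_filter.1 hy.2.2).2
          have hone : 1 ≤ (P.parts.filter
              (fun C => short k C ∧ insideShort k p C)).card := by
            rw [Nat.one_le_iff_ne_zero, ← Nat.pos_iff_ne_zero, Finset.card_pos]
            obtain ⟨C, hC, hins⟩ := hbad
            exact ⟨C, Finset.mem_filter.2 ⟨hC, inside_short hins, hins⟩⟩
          rw [hy.2.1] at hsplit
          omega
        · rw [Finset.mem_filter, insP_parts]
          exact ⟨Finset.mem_union_right _ (Finset.mem_singleton_self _), p, rfl⟩⟩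

lemma Phi_injective (k m L : ℕ) (hk : 1 ≤ k) : Function.Injective (Phi k m L hk) := by
  intro x y h
  match x, y with
  | Sum.inl ⟨(P1, p1), h1⟩, Sum.inl ⟨(P2, p2), h2⟩ =>
    have h' := congrArg Subtype.val h
    have hI : Ico p1 (p1 + k) = Ico p2 (p2 + k) := congrArg Prod.snd h'
    have hp : p1 = p2 := Ico_k_inj hk hI
    subst hp
    have hP : insP k p1 m hk (goodSet_le h1.2.2) P1
        = insP k p1 m hk (goodSet_le h2.2.2) P2 := congrArg Prod.fst h'
    have hPQ : P1 = P2 := insP_inj hk (congrArg Finpartition.parts hP)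
    subst hPQ
    rfl
  | Sum.inl ⟨(P1, p1), h1⟩, Sum.inr ⟨(P2, p2), h2⟩ =>
    have h' := congrArg Subtype.val h
    have hI : Ico p1 (p1 + k) = Ico p2 (p2 + k) := congrArg Prod.snd h'
    have hp : p1 = p2 := Ico_k_inj hk hI
    subst hp
    have hP : insP k p1 m hk (goodSet_le h1.2.2) P1
        = insP k p1 m hk (badSet_le h2.2.2) P2 := congrArg Prod.fst h'
    have hPQ : P1 = P2 := insP_inj hk (congrArg Finpartition.parts hP)
    have e1 : (P1.parts.filter (short k)).card = L := h1.2.1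
    have e2 : (P2.parts.filter (short k)).card = L + 1 := h2.2.1
    rw [hPQ] at e1
    omega
  | Sum.inr ⟨(P1, p1), h1⟩, Sum.inl ⟨(P2, p2), h2⟩ =>
    have h' := congrArg Subtype.val h
    have hI : Ico p1 (p1 + k) = Ico p2 (p2 + k) := congrArg Prod.snd h'
    have hp : p1 = p2 := Ico_k_inj hk hI
    subst hp
    have hP : insP k p1 m hk (badSet_le h1.2.2) P1
        = insP k p1 m hk (goodSet_le h2.2.2) P2 := congrArg Prod.fst h'
    have hPQ : P1 = P2 := insP_inj hk (congrArg Finpartition.parts hP)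
    have e1 : (P1.parts.filter (short k)).card = L + 1 := h1.2.1
    have e2 : (P2.parts.filter (short k)).card = L := h2.2.1
    rw [hPQ] at e1
    omega
  | Sum.inr ⟨(P1, p1), h1⟩, Sum.inr ⟨(P2, p2), h2⟩ =>
    have h' := congrArg Subtype.val h
    have hI : Ico p1 (p1 + k) = Ico p2 (p2 + k) := congrArg Prod.snd h'
    have hp : p1 = p2 := Ico_k_inj hk hI
    subst hp
    have hP : insP k p1 m hk (badSet_le h1.2.2) P1
        = insP k p1 m hk (badSet_le h2.2.2) P2 := congrArg Prod.fst h'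
    have hPQ : P1 = P2 := insP_inj hk (congrArg Finpartition.parts hP)
    subst hPQ
    rfl

lemma Phi_surjective (k m L : ℕ) (hk : 1 ≤ k) : Function.Surjective (Phi k m L hk) := by
  rintro ⟨⟨P, B⟩, hsz, hcard, hmem⟩
  rw [Finset.mem_filter] at hmem
  obtain ⟨hBmem, i, rfl⟩ := hmem
  have hik : i + k ≤ m + k := part_bound hk hBmem
  have hi : i ≤ m := by omega
  have hQsz : ∀ C ∈ (delP k i m hk P hBmem).parts, C.card = k :=
    delP_card_parts hk P hBmem hsz
  have hrec : insP k i m hk hi (delP k i m hk P hBmem) = P :=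
    Finpartition.ext (insP_delP hk P hBmem hi)
  have hins := insP_filter_short hk hi (delP k i m hk P hBmem)
  rw [hrec] at hins
  have hcard' : (P.parts.filter (short k)).card = L + 1 := hcard
  have hgoodc : ((delP k i m hk P hBmem).parts.filter
      (fun C => short k C ∧ ¬ insideShort k i C)).card = L := by omega
  have hsplit := card_filter_short_split k i (delP k i m hk P hBmem).parts
  have hle := card_filter_inside_le_one k i (delP k i m hk P hBmem)
  rcases Nat.le_one_iff_eq_zero_or_eq_one.1 hle with hε | hε
  · have hQshort : ((delP k i m hk P hBmem).parts.filter (short k)).card = L := by omega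
    have hig : i ∈ goodSet k m (delP k i m hk P hBmem) := by
      simp only [goodSet, Finset.mem_filter, Finset.mem_range]
      refine ⟨by omega, fun C hC hins' => ?_⟩
      have hCf : C ∈ (delP k i m hk P hBmem).parts.filter
          (fun C => short k C ∧ insideShort k i C) :=
        Finset.mem_filter.2 ⟨hC, inside_short hins', hins'⟩
      rw [Finset.card_eq_zero.1 hε] at hCf
      exact absurd hCf (Finset.notMem_empty C)
    refine ⟨Sum.inl ⟨(delP k i m hk P hBmem, i), hQsz, hQshort, hig⟩, ?_⟩
    apply Subtype.ext
    show (insP k i m hk _ (delP k i m hk P hBmem), Ico i (i + k)) = (P, Ico i (i + k))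
    rw [Prod.mk.injEq]
    exact ⟨hrec, rfl⟩
  · have hQshort : ((delP k i m hk P hBmem).parts.filter (short k)).card = L + 1 := by omega
    have hib : i ∈ badSet k m (delP k i m hk P hBmem) := by
      simp only [badSet, Finset.mem_filter, Finset.mem_range]
      have hne : ((delP k i m hk P hBmem).parts.filter
          (fun C => short k C ∧ insideShort k i C)).Nonempty := by
        rw [← Finset.card_pos, hε]
        omega
      obtain ⟨C, hC⟩ := hne
      obtain ⟨hCm, _, hCin⟩ := Finset.mem_filter.1 hC
      exact ⟨by omega, C, hCm, hCin⟩
    refine ⟨Sum.inr ⟨(delP k i m hk P hBmem, i), hQsz, hQshort, hib⟩, ?_⟩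
    apply Subtype.ext
    show (insP k i m hk _ (delP k i m hk P hBmem), Ico i (i + k)) = (P, Ico i (i + k))
    rw [Prod.mk.injEq]
    exact ⟨hrec, rfl⟩

lemma key (k m L : ℕ) (hk : 1 ≤ k) :
    (L + 1) * Nat.card (Dsub k (m + k) (L + 1))
      = (m + 1 - L * (k - 1)) * Nat.card (Dsub k m L)
        + ((L + 1) * (k - 1)) * Nat.card (Dsub k m (L + 1)) := by
  rw [← card_Atype, ← card_B1type hk m L, ← card_B2type hk m (L + 1), ← Nat.card_sum]
  exact (Nat.card_eq_of_bijective (Phi k m L hk)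
    ⟨Phi_injective k m L hk, Phi_surjective k m L hk⟩).symm

end Stmt7

/-- The recurrence `ℓ d_{n,ℓ} = (kn - ℓ(k-1)) d_{n-1,ℓ-1} + ℓ(k-1) d_{n-1,ℓ}`. -/
theorem stmt7 (k n ℓ : ℕ) (hk : 2 ≤ k) (hn : 1 ≤ n) (hℓ1 : 1 ≤ ℓ) (hℓn : ℓ ≤ n) :
    ℓ * dCount k n ℓ =
      (k * n - ℓ * (k - 1)) * dCount k (n - 1) (ℓ - 1) +
        ℓ * (k - 1) * dCount k (n - 1) ℓ := by
  have hk1 : 1 ≤ k := by omega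
  obtain ⟨n', rfl⟩ : ∃ n', n = n' + 1 := ⟨n - 1, by omega⟩
  obtain ⟨L, rfl⟩ : ∃ L, ℓ = L + 1 := ⟨ℓ - 1, by omega⟩
  simp only [Nat.add_sub_cancel]
  have hM : k * (n' + 1) = k * n' + k := by ring
  have h0 : dCount k (n' + 1) (L + 1) = Nat.card (Stmt7.Dsub k (k * n' + k) (L + 1)) := by
    rw [Stmt7.dCount_eq, hM]
  have h1 : dCount k n' L = Nat.card (Stmt7.Dsub k (k * n') L) := Stmt7.dCount_eq k n' L
  have h2 : dCount k n' (L + 1) = Nat.card (Stmt7.Dsub k (k * n') (L + 1)) :=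
    Stmt7.dCount_eq k n' (L + 1)
  rw [h0, h1, h2, Stmt7.key k (k * n') L hk1]
  have b1 : (L + 1) * (k - 1) = L * (k - 1) + (k - 1) := by ring
  have b2 : (L + 1) * (k - 1) ≤ (n' + 1) * (k - 1) :=
    Nat.mul_le_mul_right _ (by omega)
  have b3 : (n' + 1) * (k - 1) ≤ (n' + 1) * k := Nat.mul_le_mul_left _ (by omega)
  have b4 : (n' + 1) * k = k * n' + k := by ring
  have b5 : (L + 1) * (k - 1) ≤ k * n' + k := le_trans b2 (le_trans b3 (le_of_eq b4))
  rw [b1] at b5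
  have e : k * (n' + 1) - (L + 1) * (k - 1) = k * n' + 1 - L * (k - 1) := by
    rw [hM, b1]
    set x := L * (k - 1) with hx
    set y := k * n' with hy
    omega
  rw [e]
end
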